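/- arXiv:2001.04711 — 3 statements merged into one kernel-verified Lean document; each statement's English description precedes it below -/
import Mathlib

section
/- Let w, μ, n, r, N be positive integers with 2 ≤ r+1 ≤ n, let F = GF(2^w), and let β ∈ F have multiplicative order O(β) ≥ μN. Let L = {i_1, …, i_n} be a set of n distinct non-negative integers and let H be the (rμ+2) × (μn) parity-check matrix of the generalized Blaum–Plank construction for these data. If N ≥ (max_{i∈L} i) + 1, then H satisfies the (r, s=2) sector-disk criterion: for every subset T ⊆ {1, …, n} with |T| = r, setting E_i = {(i−1)n + t : t ∈ T} ⊆ W_i for i = 1, …, μ, and for every 2-element set F ⊆ {1, …, μn} \ (∪_i E_i), the (rμ+2) × (rμ+2) submatrix of H formed by the columns indexed by (∪_i E_i) ∪ F is invertible. -/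
/-- The generalized Blaum–Plank parity-check matrix `H` of size `(rμ+2) × (μn)` over a
field `F`, built from a unit `β` and code locators `L : Fin n → ℕ`.
Rows `0, …, rμ-1` form the `μ` diagonal blocks `H₀` (block `i = v / r`,
row-within-block `u = v % r`, entry `β^(u · i_t)` in group `g = c / n` when `g = i`,
and `0` otherwise); row `rμ` has entries `β^(r · i_t)`; row `rμ+1` has entries
`β^(-jN - i_t)` where `j = c / n` is the (0-indexed) local group of column `c`. -/
noncomputable def blaumH (μ n r N : ℕ) (hn : 0 < n) {F : Type*} [Field F]
    (β : Fˣ) (L : Fin n → ℕ) :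
    Matrix (Fin (r * μ + 2)) (Fin (μ * n)) F :=
  fun v c =>
    if (v : ℕ) < r * μ then
      if (c : ℕ) / n = (v : ℕ) / r then
        ((β ^ (((v : ℕ) % r) * L ⟨(c : ℕ) % n, Nat.mod_lt _ hn⟩) : Fˣ) : F)
      else 0
    else if (v : ℕ) = r * μ then
      ((β ^ (r * L ⟨(c : ℕ) % n, Nat.mod_lt _ hn⟩) : Fˣ) : F)
    else
      ((β ^ (-(((c : ℕ) / n : ℤ) * (N : ℤ)) -
          (L ⟨(c : ℕ) % n, Nat.mod_lt _ hn⟩ : ℤ)) : Fˣ) : F)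

/-- The `(r, s)` sector-disk criterion for a matrix with `rμ + s` rows and `μn` columns,
columns partitioned into `μ` local groups of `n` consecutive columns: for every set
`T ⊆ {1,…,n}` of `r` within-group positions (used as the erased positions `E_i` in *every*
local group) and every `s`-element set `Fs` of further columns avoiding those positions,
the square submatrix on the columns `(∪ᵢ E_i) ∪ Fs` is invertible. -/
def sdCriterion {F : Type*} [Field F] (μ n r s : ℕ) (hn : 0 < n)
    (H : Matrix (Fin (r * μ + s)) (Fin (μ * n)) F) : Prop :=
  ∀ T : Finset (Fin n),
    T.card = r →
    ∀ Fs : Finset (Fin (μ * n)),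
      Fs.card = s →
      (∀ c ∈ Fs, (⟨(c : ℕ) % n, Nat.mod_lt _ hn⟩ : Fin n) ∉ T) →
      ∀ e : Fin (r * μ + s) → Fin (μ * n),
        Function.Injective e →
        (Set.range e =
          {c : Fin (μ * n) | (⟨(c : ℕ) % n, Nat.mod_lt _ hn⟩ : Fin n) ∈ T} ∪ ↑Fs) →
        IsUnit (H.submatrix id e).det

open Matrix

section BPAux

lemma order_contra {F : Type*} [Field F] (β : Fˣ) (d : ℤ) (hd : d ≠ 0)
    (hlt : d.natAbs < orderOf β) (h1 : β ^ d = 1) : False := by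
  have hdvd : (orderOf β : ℤ) ∣ d := orderOf_dvd_iff_zpow_eq_one.mpr h1
  have h2 : (orderOf β) ∣ d.natAbs := Int.natCast_dvd_natCast.mp (Int.dvd_natAbs.mpr hdvd)
  have := Nat.le_of_dvd (Int.natAbs_pos.mpr hd) h2
  omega

lemma vand_fin {F : Type*} [Field F] {m : ℕ} (z : Fin m → F) (hz : Function.Injective z)
    (a : Fin m → F) (h : ∀ u : Fin m, ∑ c, a c * z c ^ (u : ℕ) = 0) : a = 0 := by
  by_contra ha
  have hdet : (Matrix.vandermonde z).det ≠ 0 := by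
    rw [Matrix.det_vandermonde]
    refine Finset.prod_ne_zero_iff.mpr fun i _ => Finset.prod_ne_zero_iff.mpr fun j hj => ?_
    have hij : i ≠ j := by
      intro hEq; subst hEq; exact absurd (Finset.mem_Ioi.mp hj) (lt_irrefl i)
    exact sub_ne_zero.mpr fun hzz => hij (hz hzz.symm)
  have hdet2 : ((Matrix.vandermonde z)ᵀ).det = 0 := by
    rw [← Matrix.exists_mulVec_eq_zero_iff]
    refine ⟨a, ha, funext fun u => ?_⟩
    have := h u
    simpa [Matrix.mulVec, Matrix.transpose_apply, dotProduct, Matrix.vandermonde,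
      mul_comm] using this
  rw [Matrix.det_transpose] at hdet2; exact hdet hdet2

lemma vand_finset {F : Type*} [Field F] {n : ℕ} (s : Finset (Fin n)) (z : Fin n → F)
    (hz : Function.Injective z) (a : Fin n → F)
    (h : ∀ u : ℕ, u < s.card → ∑ t ∈ s, a t * z t ^ u = 0) :
    ∀ t ∈ s, a t = 0 := by
  classical
  intro t ht
  set g : Fin s.card ≃ {x // x ∈ s} := s.equivFin.symm with hg
  have key : (fun k : Fin s.card => a (g k)) = 0 := by
    apply vand_fin (fun k => z (g k))
    · intro k k' hkk
      exact g.injective (Subtype.ext (hz hkk))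
    · intro u
      have hu : (u : ℕ) < s.card := u.2
      rw [Equiv.sum_comp g (fun x : {x // x ∈ s} => a (x : Fin n) * z (x : Fin n) ^ (u : ℕ)),
        Finset.sum_coe_sort s (fun t => a t * z t ^ (u : ℕ))]
      exact h u hu
  have := congrFun key (g.symm ⟨t, ht⟩)
  simpa using this

lemma key_sum {F : Type*} [Field F] {n : ℕ} (s : Finset (Fin n)) (z : Fin n → F)
    (hz0 : ∀ t ∈ s, z t ≠ 0) (a : Fin n → F) (hcard : 1 ≤ s.card)
    (h : ∀ u : ℕ, u + 1 < s.card → ∑ t ∈ s, a t * z t ^ u = 0) :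
    ∑ t ∈ s, a t * z t ^ (s.card - 1)
      = -((∏ t ∈ s, (-z t)) * ∑ t ∈ s, a t * (z t)⁻¹) := by
  classical
  set m := s.card with hm
  set p : Polynomial F := ∏ t ∈ s, (Polynomial.X - Polynomial.C (z t)) with hp
  have hmonic : p.Monic := Polynomial.monic_prod_of_monic _ _ fun t _ => Polynomial.monic_X_sub_C _
  have hdeg : p.natDegree = m := by
    rw [hp, Polynomial.natDegree_prod_of_monic _ _ fun t _ => Polynomial.monic_X_sub_C _]
    simp [hm]
  have hc0 : p.coeff 0 = ∏ t ∈ s, (-z t) := by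
    rw [Polynomial.coeff_zero_eq_eval_zero, hp, Polynomial.eval_prod]
    simp
  have hcm : p.coeff m = 1 := by rw [← hdeg]; exact hmonic.coeff_natDegree
  have hexp : ∀ t ∈ s, ∑ k ∈ Finset.range (m+1), p.coeff k * z t ^ k = 0 := by
    intro t ht
    have hev : p.eval (z t) = 0 := by
      rw [hp, Polynomial.eval_prod]
      exact Finset.prod_eq_zero ht (by simp)
    have := Polynomial.eval_eq_sum_range' (n := m+1) (by rw [hdeg]; omega) (z t)
    rw [← this, hev]
  have main : (0:F) = ∑ k ∈ Finset.range (m+1), p.coeff k * ∑ t ∈ s, a t * (z t)⁻¹ * z t ^ k := by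
    have : ∑ t ∈ s, a t * (z t)⁻¹ * ∑ k ∈ Finset.range (m+1), p.coeff k * z t ^ k = 0 := by
      refine Finset.sum_eq_zero fun t ht => ?_
      rw [hexp t ht, mul_zero]
    rw [← this]
    simp_rw [Finset.mul_sum]
    rw [Finset.sum_comm]
    refine Finset.sum_congr rfl fun k _ => Finset.sum_congr rfl fun t _ => by ring
  have hmid : ∀ k ∈ Finset.range (m-1), p.coeff (k+1) * ∑ t ∈ s, a t * (z t)⁻¹ * z t ^ (k+1) = 0 := by
    intro k hk
    have hk' : k + 1 < m := by have := Finset.mem_range.mp hk; omega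
    have : ∑ t ∈ s, a t * (z t)⁻¹ * z t ^ (k+1) = ∑ t ∈ s, a t * z t ^ k := by
      refine Finset.sum_congr rfl fun t ht => ?_
      rw [pow_succ', mul_assoc, ← mul_assoc ((z t)⁻¹), inv_mul_cancel₀ (hz0 t ht), one_mul]
    rw [this, h k hk', mul_zero]
  have hpeel : (0:F) = p.coeff 0 * ∑ t ∈ s, a t * (z t)⁻¹
      + p.coeff m * ∑ t ∈ s, a t * (z t)⁻¹ * z t ^ m := by
    rw [main, Finset.sum_range_succ]
    congr 1
    have hm1 : m = (m - 1) + 1 := by omega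
    rw [hm1, Finset.sum_range_succ']
    rw [Finset.sum_eq_zero hmid, zero_add]
    simp
  have hlast : ∑ t ∈ s, a t * (z t)⁻¹ * z t ^ m = ∑ t ∈ s, a t * z t ^ (m-1) := by
    refine Finset.sum_congr rfl fun t ht => ?_
    have hm1 : m = (m - 1) + 1 := by omega
    rw [hm1, pow_succ', mul_assoc, ← mul_assoc ((z t)⁻¹), inv_mul_cancel₀ (hz0 t ht), one_mul]
    norm_num
  rw [hlast, hcm, hc0, one_mul] at hpeel
  linear_combination -hpeel

def bpCol {μ n : ℕ} (i : Fin μ) (t : Fin n) : Fin (μ * n) :=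
  ⟨(i : ℕ) * n + (t : ℕ), by
    have h1 : (i : ℕ) + 1 ≤ μ := i.2
    have h2 : (t : ℕ) < n := t.2
    calc (i : ℕ) * n + (t : ℕ) < (i : ℕ) * n + n := by omega
    _ = ((i : ℕ) + 1) * n := by ring
    _ ≤ μ * n := Nat.mul_le_mul_right n h1⟩

lemma bpCol_div {μ n : ℕ} (hn : 0 < n) (i : Fin μ) (t : Fin n) :
    ((bpCol i t : ℕ)) / n = (i : ℕ) := by
  show ((i : ℕ) * n + (t : ℕ)) / n = (i : ℕ)
  rw [mul_comm, Nat.mul_add_div hn, Nat.div_eq_of_lt t.2, add_zero]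

lemma bpCol_mod {μ n : ℕ} (i : Fin μ) (t : Fin n) :
    ((bpCol i t : ℕ)) % n = (t : ℕ) := by
  show ((i : ℕ) * n + (t : ℕ)) % n = (t : ℕ)
  rw [mul_comm, Nat.mul_add_mod, Nat.mod_eq_of_lt t.2]

def bpGrp {μ n : ℕ} (hn : 0 < n) : Fin μ × Fin n ≃ Fin (μ * n) where
  toFun p := bpCol p.1 p.2
  invFun c := (⟨(c : ℕ) / n, (Nat.div_lt_iff_lt_mul hn).mpr c.2⟩,
      ⟨(c : ℕ) % n, Nat.mod_lt _ hn⟩)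
  left_inv p := Prod.ext (Fin.ext (bpCol_div hn p.1 p.2)) (Fin.ext (bpCol_mod p.1 p.2))
  right_inv c := Fin.ext (by
    show ((c : ℕ) / n) * n + (c : ℕ) % n = (c : ℕ)
    rw [mul_comm]; exact Nat.div_add_mod _ _)

lemma bpCol_fin_mod {μ n : ℕ} (hn : 0 < n) (j : Fin μ) (t : Fin n) :
    (⟨(bpCol j t : ℕ) % n, Nat.mod_lt _ hn⟩ : Fin n) = t := Fin.ext (bpCol_mod j t)

end BPAux


section BPEntry

lemma blaumH_block {μ n r N : ℕ} (hn : 0 < n) {F : Type*} [Field F] (β : Fˣ) (L : Fin n → ℕ)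
    (i : Fin μ) (u : ℕ) (hu : u < r) (hlt : u + r * (i : ℕ) < r * μ + 2)
    (j : Fin μ) (t : Fin n) :
    blaumH μ n r N hn β L ⟨u + r * (i : ℕ), hlt⟩ (bpCol j t)
      = if (j : ℕ) = (i : ℕ) then (((β ^ (L t) : Fˣ) : F)) ^ u else 0 := by
  have hur : u + r * (i : ℕ) < r * μ := by
    have h1 : (i : ℕ) + 1 ≤ μ := i.2
    calc u + r * (i : ℕ) < r + r * (i : ℕ) := by omega
    _ = r * ((i : ℕ) + 1) := by ring
    _ ≤ r * μ := Nat.mul_le_mul_left r h1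
  have hdivr : (u + r * (i : ℕ)) / r = (i : ℕ) := by
    rw [Nat.add_mul_div_left _ _ (by omega : 0 < r), Nat.div_eq_of_lt hu, zero_add]
  have hmodr : (u + r * (i : ℕ)) % r = u := by
    rw [Nat.add_mul_mod_self_left u r (i : ℕ), Nat.mod_eq_of_lt hu]
  simp only [blaumH, bpCol_fin_mod hn j t]
  rw [if_pos hur, bpCol_div hn j t, hdivr, hmodr]
  split
  · rw [mul_comm u (L t), pow_mul, Units.val_pow_eq_pow_val]
  · rfl

lemma blaumH_rowR {μ n r N : ℕ} (hn : 0 < n) {F : Type*} [Field F] (β : Fˣ) (L : Fin n → ℕ)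
    (hlt : r * μ < r * μ + 2) (j : Fin μ) (t : Fin n) :
    blaumH μ n r N hn β L ⟨r * μ, hlt⟩ (bpCol j t)
      = (((β ^ (L t) : Fˣ) : F)) ^ r := by
  simp only [blaumH, bpCol_fin_mod hn j t]
  rw [if_neg (lt_irrefl _), if_pos trivial, mul_comm r (L t), pow_mul, Units.val_pow_eq_pow_val]

lemma blaumH_rowL {μ n r N : ℕ} (hn : 0 < n) {F : Type*} [Field F] (β : Fˣ) (L : Fin n → ℕ)
    (hlt : r * μ + 1 < r * μ + 2) (j : Fin μ) (t : Fin n) :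
    blaumH μ n r N hn β L ⟨r * μ + 1, hlt⟩ (bpCol j t)
      = ((β ^ (-(((j : ℕ) : ℤ) * (N : ℤ))) : Fˣ) : F) * (((β ^ (L t) : Fˣ) : F))⁻¹ := by
  simp only [blaumH, bpCol_fin_mod hn j t]
  rw [if_neg (by omega), if_neg (by omega)]
  rw [show ((bpCol j t : ℕ) : ℤ) / (n : ℤ) = ((j : ℕ) : ℤ) by
    rw [← Int.natCast_div, bpCol_div hn j t]]
  rw [_root_.zpow_sub, zpow_natCast, Units.val_mul, Units.val_inv_eq_inv_val]

end BPEntry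


/-- Let `w, μ, n, r, N` be positive integers with `2 ≤ r+1 ≤ n`, let
`F = GF(2^w)`, and let `β ∈ F` have multiplicative order at least `μN`. Let
`L = {i₁, …, i_n}` be `n` distinct non-negative integers and `H` the generalized
Blaum–Plank parity-check matrix for these data. If `N ≥ (maxᵢ L i) + 1`, then `H`
satisfies the `(r, s = 2)` sector-disk criterion. -/
theorem statement1 (w μ n r N : ℕ) (hw : 0 < w) (hμ : 0 < μ) (hr : 0 < r) (hN : 0 < N)
    (hn : 0 < n) (hrn : r + 1 ≤ n)
    (F : Type*) [Field F] [Fintype F] (hF : Fintype.card F = 2 ^ w)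
    (β : Fˣ) (hβ : μ * N ≤ orderOf β)
    (L : Fin n → ℕ) (hL : Function.Injective L)
    (hNbound : Finset.univ.sup L + 1 ≤ N) :
    sdCriterion μ n r 2 hn (blaumH μ n r N hn β L) := by
  classical
  intro T hT Fs hFs hFsT e he hrange
  rw [isUnit_iff_ne_zero]
  intro hdet
  obtain ⟨v, hv0, hvker⟩ := Matrix.exists_mulVec_eq_zero_iff.mpr hdet
  have hLlt : ∀ t, L t < N := fun t => by
    have := Finset.le_sup (f := L) (Finset.mem_univ t)
    omega
  set a : Fin (μ * n) → F := fun c => ∑ k, if e k = c then v k else 0 with ha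
  set A : Fin μ → Fin n → F := fun i t => a (bpCol i t) with hA
  set z : Fin n → F := fun t => ((β ^ (L t) : Fˣ) : F) with hz
  set w' : Fin μ → F := fun i => ((β ^ (-(((i : ℕ) : ℤ) * (N : ℤ))) : Fˣ) : F) with hw'
  set Ti : Fin μ → F := fun i => ∑ t, A i t * (z t)⁻¹ with hTi
  have hzne : ∀ t, z t ≠ 0 := fun t => Units.ne_zero _
  have hwne : ∀ i, w' i ≠ 0 := fun i => Units.ne_zero _
  have zinj : Function.Injective z := by
    intro t t' htt
    simp only [hz] at htt
    by_contra hne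
    have hval : (β ^ L t : Fˣ) = β ^ L t' := Units.ext htt
    have h1 : β ^ ((L t : ℤ) - (L t' : ℤ)) = 1 := by
      rw [_root_.zpow_sub, zpow_natCast, zpow_natCast, hval]
      simp
    have hNord : N ≤ orderOf β := le_trans (Nat.le_mul_of_pos_left N hμ) hβ
    refine order_contra β _ ?_ ?_ h1
    · have : L t ≠ L t' := fun hEq => hne (hL hEq)
      omega
    · have h2 := hLlt t; have h3 := hLlt t'
      omega
  have hva : ∀ k, a (e k) = v k := by
    intro k
    simp [ha, he.eq_iff]
  have hsupp0 : ∀ c, c ∉ Set.range e → a c = 0 := by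
    intro c hc
    refine Finset.sum_eq_zero fun k _ => ?_
    exact if_neg fun hEq => hc ⟨k, hEq⟩
  have hrow : ∀ ρ : Fin (r * μ + 2),
      ∑ i : Fin μ, ∑ t : Fin n, blaumH μ n r N hn β L ρ (bpCol i t) * A i t = 0 := by
    intro ρ
    have h1 : ∑ c, blaumH μ n r N hn β L ρ c * a c
        = ∑ k, blaumH μ n r N hn β L ρ (e k) * v k := by
      simp only [ha, Finset.mul_sum, mul_ite, mul_zero]
      rw [Finset.sum_comm]
      refine Finset.sum_congr rfl fun k _ => ?_
      rw [Finset.sum_ite_eq]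
      simp
    have h2 : ∑ c, blaumH μ n r N hn β L ρ c * a c
        = ∑ i : Fin μ, ∑ t : Fin n, blaumH μ n r N hn β L ρ (bpCol i t) * A i t := by
      rw [← Equiv.sum_comp (bpGrp hn) (fun c => blaumH μ n r N hn β L ρ c * a c),
        Fintype.sum_prod_type]
      rfl
    have h3 : ∑ k, blaumH μ n r N hn β L ρ (e k) * v k = 0 := by
      have := congrFun hvker ρ
      simpa [Matrix.mulVec, dotProduct] using this
    rw [← h2, h1]
    exact h3
  have hE1 : ∀ (i : Fin μ) (u : ℕ), u < r → ∑ t, A i t * z t ^ u = 0 := by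
    intro i u hu
    have hlt : u + r * (i : ℕ) < r * μ + 2 := by
      have h1 : (i : ℕ) + 1 ≤ μ := i.2
      have h2 : r * ((i : ℕ) + 1) ≤ r * μ := Nat.mul_le_mul_left r h1
      have h3 : r * ((i : ℕ) + 1) = r * (i : ℕ) + r := by ring
      omega
    have h0 := hrow ⟨u + r * (i : ℕ), hlt⟩
    simp only [blaumH_block hn β L i u hu hlt] at h0
    have key : ∑ j : Fin μ, ∑ t, (if (j : ℕ) = (i : ℕ) then (((β ^ (L t) : Fˣ) : F)) ^ u else 0) * A j t
        = ∑ t, A i t * z t ^ u := by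
      refine (Finset.sum_eq_single i ?_ ?_).trans ?_
      · intro j _ hji
        exact Finset.sum_eq_zero fun t _ => by
          rw [if_neg (fun hEq => hji (Fin.ext hEq)), zero_mul]
      · intro hi; exact absurd (Finset.mem_univ i) hi
      · refine Finset.sum_congr rfl fun t _ => ?_
        rw [if_pos rfl, mul_comm]
    rw [← key]
    exact h0
  have hE2 : ∑ i : Fin μ, ∑ t, A i t * z t ^ r = 0 := by
    have h0 := hrow ⟨r * μ, by omega⟩
    simp only [blaumH_rowR hn β L (by omega : r * μ < r * μ + 2)] at h0
    rw [← h0]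
    refine Finset.sum_congr rfl fun i _ => Finset.sum_congr rfl fun t _ => ?_
    simp only [hz]
    ring
  have hE3 : ∑ i : Fin μ, w' i * Ti i = 0 := by
    have h0 := hrow ⟨r * μ + 1, by omega⟩
    simp only [blaumH_rowL hn β L (by omega : r * μ + 1 < r * μ + 2)] at h0
    rw [← h0]
    refine Finset.sum_congr rfl fun i _ => ?_
    simp only [hTi, hz, hw', Finset.mul_sum]
    refine Finset.sum_congr rfl fun t _ => ?_
    ring
  have hsupp : ∀ i t, A i t ≠ 0 → t ∈ T ∨ bpCol i t ∈ Fs := by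
    intro i t hAt
    have hmem : bpCol i t ∈ Set.range e := by
      by_contra hc
      exact hAt (hsupp0 _ hc)
    rw [hrange] at hmem
    rcases hmem with hm | hm
    · left
      have h1 : (⟨(bpCol i t : ℕ) % n, Nat.mod_lt _ hn⟩ : Fin n) ∈ T := hm
      rwa [bpCol_fin_mod hn i t] at h1
    · right
      exact hm
  have hsum_ext : ∀ (i : Fin μ) (s : Finset (Fin n)) (g : Fin n → F),
      (∀ t, A i t ≠ 0 → t ∈ s) → ∑ t ∈ s, A i t * g t = ∑ t, A i t * g t := by
    intro i s g hsup
    refine Finset.sum_subset (Finset.subset_univ s) fun x _ hx => ?_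
    have hAx : A i x = 0 := by
      by_contra hAx; exact hx (hsup x hAx)
    rw [hAx, zero_mul]
  have hgrpzero : ∀ (i : Fin μ) (s : Finset (Fin n)),
      (∀ t, A i t ≠ 0 → t ∈ s) →
      (∀ u : ℕ, u < s.card → ∑ t, A i t * z t ^ u = 0) → ∀ t, A i t = 0 := by
    intro i s hsup heq t
    by_cases hts : t ∈ s
    · refine vand_finset s z zinj (fun t => A i t) ?_ t hts
      intro u hu
      rw [hsum_ext i s (fun t => z t ^ u) hsup]
      exact heq u hu
    · by_contra hAt; exact hts (hsup t hAt)
  obtain ⟨f1, f2, hf12, hFs2⟩ := Finset.card_eq_two.mp hFs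
  set i1 : Fin μ := ⟨(f1 : ℕ) / n, (Nat.div_lt_iff_lt_mul hn).mpr f1.2⟩ with hi1
  set t1 : Fin n := ⟨(f1 : ℕ) % n, Nat.mod_lt _ hn⟩ with ht1d
  set i2 : Fin μ := ⟨(f2 : ℕ) / n, (Nat.div_lt_iff_lt_mul hn).mpr f2.2⟩ with hi2
  set t2 : Fin n := ⟨(f2 : ℕ) % n, Nat.mod_lt _ hn⟩ with ht2d
  have hcol1 : bpCol i1 t1 = f1 := Fin.ext (by
    show ((f1 : ℕ) / n) * n + (f1 : ℕ) % n = (f1 : ℕ)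
    rw [mul_comm]; exact Nat.div_add_mod _ _)
  have hcol2 : bpCol i2 t2 = f2 := Fin.ext (by
    show ((f2 : ℕ) / n) * n + (f2 : ℕ) % n = (f2 : ℕ)
    rw [mul_comm]; exact Nat.div_add_mod _ _)
  have ht1T : t1 ∉ T := hFsT f1 (by rw [hFs2]; exact Finset.mem_insert_self _ _)
  have ht2T : t2 ∉ T := hFsT f2 (by rw [hFs2]; simp)
  have hcolinj : ∀ (i : Fin μ) (t : Fin n) (i' : Fin μ) (t' : Fin n),
      bpCol i t = bpCol i' t' → i = i' ∧ t = t' := by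
    intro i t i' t' hEq
    have hv : (bpCol i t : ℕ) = (bpCol i' t' : ℕ) := congrArg Fin.val hEq
    constructor
    · exact Fin.ext (by rw [← bpCol_div hn i t, ← bpCol_div hn i' t', hv])
    · exact Fin.ext (by rw [← bpCol_mod i t, ← bpCol_mod i' t', hv])
  have hmemFs : ∀ (i : Fin μ) (t : Fin n), bpCol i t ∈ Fs →
      (i = i1 ∧ t = t1) ∨ (i = i2 ∧ t = t2) := by
    intro i t hm
    rw [hFs2] at hm
    rcases Finset.mem_insert.mp hm with hm | hm
    · exact Or.inl (hcolinj i t i1 t1 (by rw [hm, hcol1]))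
    · exact Or.inr (hcolinj i t i2 t2 (by rw [Finset.mem_singleton.mp hm, hcol2]))
  have hpure : ∀ i : Fin μ, i ≠ i1 → i ≠ i2 → ∀ t, A i t = 0 := by
    intro i h1 h2
    refine hgrpzero i T ?_ ?_
    · intro t hAt
      rcases hsupp i t hAt with h | h
      · exact h
      · rcases hmemFs i t h with ⟨hEq, _⟩ | ⟨hEq, _⟩
        · exact absurd hEq h1
        · exact absurd hEq h2
    · intro u hu; rw [hT] at hu; exact hE1 i u hu
  have hfinal : (∀ i t, A i t = 0) → False := by
    intro hAall
    apply hv0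
    funext k
    have hp : (bpGrp hn) ((bpGrp hn).symm (e k)) = e k := (bpGrp hn).apply_symm_apply _
    have hz0 : a (e k) = 0 := by
      rw [← hp]
      exact hAall ((bpGrp hn).symm (e k)).1 ((bpGrp hn).symm (e k)).2
    show v k = 0
    rw [← hva k, hz0]
  by_cases hii : i1 = i2
  · -- Case A: both extra columns in the same group
    have ht12 : t1 ≠ t2 := by
      intro hEq
      exact hf12 (by rw [← hcol1, ← hcol2, hii, hEq])
    have hzero' : ∀ i, i ≠ i1 → ∀ t, A i t = 0 := fun i h1 =>
      hpure i h1 (by rw [← hii]; exact h1)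
    have ht1m : t1 ∉ insert t2 T := by
      intro hm
      rcases Finset.mem_insert.mp hm with h | h
      · exact ht12 h
      · exact ht1T h
    have hs0card : (insert t1 (insert t2 T)).card = r + 2 := by
      rw [Finset.card_insert_of_notMem ht1m, Finset.card_insert_of_notMem ht2T, hT]
    have hsupA : ∀ t, A i1 t ≠ 0 → t ∈ insert t1 (insert t2 T) := by
      intro t hAt
      rcases hsupp i1 t hAt with h | h
      · exact Finset.mem_insert_of_mem (Finset.mem_insert_of_mem h)
      · rcases hmemFs i1 t h with ⟨_, hEq⟩ | ⟨_, hEq⟩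
        · rw [hEq]; exact Finset.mem_insert_self _ _
        · rw [hEq]; exact Finset.mem_insert_of_mem (Finset.mem_insert_self _ _)
    have hE2' : ∑ t, A i1 t * z t ^ r = 0 := by
      rw [← hE2]
      exact (Finset.sum_eq_single (f := fun i => ∑ t, A i t * z t ^ r) i1
        (fun j _ hj => Finset.sum_eq_zero fun t _ => by rw [hzero' j hj t, zero_mul])
        (fun hi => absurd (Finset.mem_univ i1) hi)).symm
    have hT1 : Ti i1 = 0 := by
      have h0 : ∑ i, w' i * Ti i = w' i1 * Ti i1 := Finset.sum_eq_single
        (f := fun i => w' i * Ti i) i1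
        (fun j _ hj => by
          show w' j * Ti j = 0
          have hTj : Ti j = 0 := by
            simp only [hTi]
            exact Finset.sum_eq_zero fun t _ => by rw [hzero' j hj t, zero_mul]
          rw [hTj, mul_zero])
        (fun hi => absurd (Finset.mem_univ i1) hi)
      have h1 : w' i1 * Ti i1 = 0 := h0.symm.trans hE3
      rcases mul_eq_zero.mp h1 with h | h
      · exact absurd h (hwne i1)
      · exact h
    have hbz : ∀ t ∈ insert t1 (insert t2 T), A i1 t * (z t)⁻¹ = 0 := by
      refine vand_finset _ z zinj (fun t => A i1 t * (z t)⁻¹) ?_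
      intro u hu
      rw [hs0card] at hu
      rcases u with _ | k
      · simp only [pow_zero, mul_one]
        rw [hsum_ext i1 _ (fun t => (z t)⁻¹) hsupA]
        exact hT1
      · have hstep : ∀ t, (A i1 t * (z t)⁻¹) * z t ^ (k+1) = A i1 t * z t ^ k := by
          intro t
          rw [pow_succ', mul_assoc, ← mul_assoc ((z t)⁻¹), inv_mul_cancel₀ (hzne t), one_mul]
        calc ∑ t ∈ insert t1 (insert t2 T), (A i1 t * (z t)⁻¹) * z t ^ (k+1)
            = ∑ t ∈ insert t1 (insert t2 T), A i1 t * z t ^ k :=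
          Finset.sum_congr rfl fun t _ => hstep t
        _ = ∑ t, A i1 t * z t ^ k := hsum_ext i1 _ (fun t => z t ^ k) hsupA
        _ = 0 := by
          rcases Nat.lt_or_ge k r with hk | hk
          · exact hE1 i1 k hk
          · have hkr : k = r := by omega
            rw [hkr]; exact hE2'
    have hA1 : ∀ t, A i1 t = 0 := by
      intro t
      by_cases hts : t ∈ insert t1 (insert t2 T)
      · have h := hbz t hts
        rcases mul_eq_zero.mp h with h | h
        · exact h
        · exact absurd h (inv_ne_zero (hzne t))
      · by_contra hAt; exact hts (hsupA t hAt)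
    refine hfinal fun i t => ?_
    by_cases hi : i = i1
    · rw [hi]; exact hA1 t
    · exact hzero' i hi t
  · -- Case B: extra columns in different groups
    have hs1card : (insert t1 T).card = r + 1 := by
      rw [Finset.card_insert_of_notMem ht1T, hT]
    have hs2card : (insert t2 T).card = r + 1 := by
      rw [Finset.card_insert_of_notMem ht2T, hT]
    have hsupA1 : ∀ t, A i1 t ≠ 0 → t ∈ insert t1 T := by
      intro t hAt
      rcases hsupp i1 t hAt with h | h
      · exact Finset.mem_insert_of_mem h
      · rcases hmemFs i1 t h with ⟨_, hEq⟩ | ⟨hEq, _⟩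
        · rw [hEq]; exact Finset.mem_insert_self _ _
        · exact absurd hEq hii
    have hsupA2 : ∀ t, A i2 t ≠ 0 → t ∈ insert t2 T := by
      intro t hAt
      rcases hsupp i2 t hAt with h | h
      · exact Finset.mem_insert_of_mem h
      · rcases hmemFs i2 t h with ⟨hEq, _⟩ | ⟨_, hEq⟩
        · exact absurd hEq.symm hii
        · rw [hEq]; exact Finset.mem_insert_self _ _
    have hred : ∀ g : Fin μ → F, (∀ i, i ≠ i1 → i ≠ i2 → g i = 0) →
        ∑ i, g i = g i1 + g i2 := by
      intro g hg
      rw [← Finset.sum_pair hii]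
      refine (Finset.sum_subset (Finset.subset_univ _) fun x _ hx => ?_).symm
      simp only [Finset.mem_insert, Finset.mem_singleton, not_or] at hx
      exact hg x hx.1 hx.2
    have hzeropure : ∀ (j : Fin μ), j ≠ i1 → j ≠ i2 → ∀ gt : Fin n → F,
        ∑ t, A j t * gt t = 0 := by
      intro j h1 h2 gt
      exact Finset.sum_eq_zero fun t _ => by rw [hpure j h1 h2 t, zero_mul]
    have hE2' : (∑ t, A i1 t * z t ^ r) + (∑ t, A i2 t * z t ^ r) = 0 :=
      ((hred (fun i => ∑ t, A i t * z t ^ r)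
        (fun i h1 h2 => hzeropure i h1 h2 _)).symm).trans hE2
    have hE3' : w' i1 * Ti i1 + w' i2 * Ti i2 = 0 :=
      ((hred (fun i => w' i * Ti i) (fun i h1 h2 => by
        show w' i * Ti i = 0
        have hTj : Ti i = 0 := by
          simp only [hTi]
          exact hzeropure i h1 h2 _
        rw [hTj, mul_zero])).symm).trans hE3
    have hK : ∀ (j : Fin μ) (tj : Fin n), tj ∉ T → (∀ t, A j t ≠ 0 → t ∈ insert tj T) →
        ∑ t, A j t * z t ^ r = -((∏ t ∈ insert tj T, (-z t)) * Ti j) := by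
      intro j tj htjT hsupj
      have hcard : (insert tj T).card = r + 1 := by
        rw [Finset.card_insert_of_notMem htjT, hT]
      have h0 := key_sum (insert tj T) z (fun t _ => hzne t) (fun t => A j t)
        (by rw [hcard]; omega)
        (fun u hu => by
          rw [hsum_ext j _ (fun t => z t ^ u) hsupj]
          exact hE1 j u (by rw [hcard] at hu; omega))
      rw [hcard] at h0
      simp only [Nat.add_sub_cancel] at h0
      rw [hsum_ext j _ (fun t => z t ^ r) hsupj] at h0
      rw [hsum_ext j _ (fun t => (z t)⁻¹) hsupj] at h0
      simp only [hTi]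
      exact h0
    have hK1 := hK i1 t1 ht1T hsupA1
    have hK2 := hK i2 t2 ht2T hsupA2
    by_cases hT1 : Ti i1 = 0
    · have hT2 : Ti i2 = 0 := by
        rw [hT1, mul_zero, zero_add] at hE3'
        rcases mul_eq_zero.mp hE3' with h | h
        · exact absurd h (hwne i2)
        · exact h
      have hz1 : ∀ t, A i1 t = 0 := by
        refine hgrpzero i1 (insert t1 T) hsupA1 ?_
        intro u hu
        rw [hs1card] at hu
        rcases Nat.lt_or_ge u r with h | h
        · exact hE1 i1 u h
        · have hur : u = r := by omega
          rw [hur, hK1, hT1, mul_zero, neg_zero]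
      have hz2 : ∀ t, A i2 t = 0 := by
        refine hgrpzero i2 (insert t2 T) hsupA2 ?_
        intro u hu
        rw [hs2card] at hu
        rcases Nat.lt_or_ge u r with h | h
        · exact hE1 i2 u h
        · have hur : u = r := by omega
          rw [hur, hK2, hT2, mul_zero, neg_zero]
      refine hfinal fun i t => ?_
      by_cases h1 : i = i1
      · rw [h1]; exact hz1 t
      · by_cases h2 : i = i2
        · rw [h2]; exact hz2 t
        · exact hpure i h1 h2 t
    · have hT2 : Ti i2 ≠ 0 := by
        intro h2
        apply hT1
        rw [h2, mul_zero, add_zero] at hE3'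
        rcases mul_eq_zero.mp hE3' with h | h
        · exact absurd h (hwne i1)
        · exact h
      have hQne : (∏ t ∈ T, (-z t)) ≠ 0 :=
        Finset.prod_ne_zero_iff.mpr fun t _ => neg_ne_zero.mpr (hzne t)
      rw [Finset.prod_insert ht1T] at hK1
      rw [Finset.prod_insert ht2T] at hK2
      have h5 : (∏ t ∈ T, (-z t)) * (z t1 * Ti i1 + z t2 * Ti i2) = 0 := by
        linear_combination hE2' - hK1 - hK2
      have hzz : z t1 * Ti i1 + z t2 * Ti i2 = 0 := (mul_eq_zero.mp h5).resolve_left hQne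
      have h6 : (z t1 * w' i2) * (Ti i1 * Ti i2) = (z t2 * w' i1) * (Ti i1 * Ti i2) := by
        linear_combination (w' i2 * Ti i2) * hzz - (z t2 * Ti i2) * hE3'
      have h7 : z t1 * w' i2 = z t2 * w' i1 :=
        mul_right_cancel₀ (mul_ne_zero hT1 hT2) h6
      have h8 : (β ^ (L t1) * β ^ (-(((i2 : ℕ) : ℤ) * (N : ℤ))) : Fˣ)
          = β ^ (L t2) * β ^ (-(((i1 : ℕ) : ℤ) * (N : ℤ))) := by
        apply Units.ext
        rw [Units.val_mul, Units.val_mul]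
        simp only [hz, hw'] at h7
        exact h7
      have h9 : β ^ (((L t1 : ℤ) + -(((i2 : ℕ) : ℤ) * (N : ℤ)))
          - ((L t2 : ℤ) + -(((i1 : ℕ) : ℤ) * (N : ℤ)))) = 1 := by
        rw [_root_.zpow_sub, _root_.zpow_add, _root_.zpow_add, zpow_natCast, zpow_natCast, h8]
        group
      set d : ℤ := ((L t1 : ℤ) + -(((i2 : ℕ) : ℤ) * (N : ℤ)))
          - ((L t2 : ℤ) + -(((i1 : ℕ) : ℤ) * (N : ℤ))) with hd
      obtain ⟨M, hM⟩ : ∃ M, μ * N = M := ⟨_, rfl⟩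
      have hMpos : 0 < M := by
        rw [← hM]; exact Nat.mul_pos hμ hN
      have hii' : (i1 : ℕ) ≠ (i2 : ℕ) := fun h => hii (Fin.ext h)
      have hi1μ : ((i1 : ℕ) : ℤ) ≤ (μ : ℤ) - 1 := by
        have := i1.2; omega
      have hi2μ : ((i2 : ℕ) : ℤ) ≤ (μ : ℤ) - 1 := by
        have := i2.2; omega
      have hl1 : (L t1 : ℤ) < (N : ℤ) := by exact_mod_cast hLlt t1
      have hl2 : (L t2 : ℤ) < (N : ℤ) := by exact_mod_cast hLlt t2
      have hl1n : (0 : ℤ) ≤ (L t1 : ℤ) := Int.natCast_nonneg _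
      have hl2n : (0 : ℤ) ≤ (L t2 : ℤ) := Int.natCast_nonneg _
      have hMz : ((μ : ℤ) - 1) * (N : ℤ) = (M : ℤ) - (N : ℤ) := by
        rw [← hM]; push_cast; ring
      have hdbound : d ≠ 0 ∧ d.natAbs < M := by
        rcases Nat.lt_or_ge (i1 : ℕ) (i2 : ℕ) with hlt | hge
        · have hlt' : ((i1 : ℕ) : ℤ) + 1 ≤ ((i2 : ℕ) : ℤ) := by exact_mod_cast hlt
          have hP1 : (((i2 : ℕ) : ℤ) - ((i1 : ℕ) : ℤ)) * (N : ℤ) ≤ ((μ : ℤ) - 1) * (N : ℤ) := by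
            apply mul_le_mul_of_nonneg_right _ (by positivity)
            have := Int.natCast_nonneg (i1 : ℕ)
            omega
          have hP2 : (1 : ℤ) * (N : ℤ) ≤ (((i2 : ℕ) : ℤ) - ((i1 : ℕ) : ℤ)) * (N : ℤ) := by
            apply mul_le_mul_of_nonneg_right _ (by positivity)
            omega
          rw [hMz] at hP1
          rw [one_mul] at hP2
          have hdneg : d < 0 := by
            rw [hd]; linarith
          have hdlow : -(M : ℤ) < d := by
            rw [hd]; linarith
          exact ⟨ne_of_lt hdneg, by omega⟩
        · have hgt : (i2 : ℕ) < (i1 : ℕ) := by omega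
          have hlt' : ((i2 : ℕ) : ℤ) + 1 ≤ ((i1 : ℕ) : ℤ) := by exact_mod_cast hgt
          have hP1 : (((i1 : ℕ) : ℤ) - ((i2 : ℕ) : ℤ)) * (N : ℤ) ≤ ((μ : ℤ) - 1) * (N : ℤ) := by
            apply mul_le_mul_of_nonneg_right _ (by positivity)
            have := Int.natCast_nonneg (i2 : ℕ)
            omega
          have hP2 : (1 : ℤ) * (N : ℤ) ≤ (((i1 : ℕ) : ℤ) - ((i2 : ℕ) : ℤ)) * (N : ℤ) := by
            apply mul_le_mul_of_nonneg_right _ (by positivity)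
            omega
          rw [hMz] at hP1
          rw [one_mul] at hP2
          have hdpos : 0 < d := by
            rw [hd]; linarith
          have hdupp : d < (M : ℤ) := by
            rw [hd]; linarith
          exact ⟨ne_of_gt hdpos, by omega⟩
      exact order_contra β d hdbound.1 (lt_of_lt_of_le (hM ▸ hdbound.2) hβ) h9
end

section
/- Let μ, n, r, d be positive integers with r ≤ n and n−r ≤ d ≤ n−1, set b = d+1−(n−r), N = (r+1)(rn−1−r)+1, and let q = 2^w satisfy q ≥ max{μN, bn}. Let β ∈ GF(q) have multiplicative order O(β) ≥ max{μN, bn} and set β_{i,j} = β^{(i−1)+(j−1)n} for 1 ≤ i ≤ n, 1 ≤ j ≤ b. Then for every a ∈ {0, 1, …, b^n − 1} with base-b digit expansion a = Σ_{i=1}^n a_i b^{i−1} (a_i ∈ {0,…,b−1}), the matrix H^{(a)} of Construction 1 satisfies the (r, s=2) partial-MDS criterion: for every choice of subsets E_i ⊆ W_i with |E_i| = r for i = 1, …, μ, and every 2-element set F ⊆ {1, …, μn} \ (∪_i E_i), the (rμ+2) × (rμ+2) submatrix of H^{(a)} formed by the columns indexed by (∪_i E_i) ∪ F is invertible. -/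
/-- The parity-check matrix `H^(a)` of Construction 1 (locally `d`-MSR PMDS/SD array
codes), of size `(rμ+2) × (μn)` over a field `F`, for the row index `a` with base-`b`
digits `a_t = (a / b^t) % b` (0-indexed `t`).  With `β_{t, a_t+1} = β^(t + a_t · n)`,
rows `0, …, rμ-1` form the `μ` diagonal Vandermonde blocks `H₀^(a)` with entries
`β_{t,a_t+1}^u` (block `i = v / r`, row-within-block `u = v % r`); row `rμ` has entries
`β_{t,a_t+1}^r`; row `rμ+1` has entries `β^(-jN) · β_{t,a_t+1}⁻¹`, where `j = c / n`
is the (0-indexed) local group of column `c`. -/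
noncomputable def construction1H (μ n r N b : ℕ) (hn : 0 < n) {F : Type*} [Field F]
    (β : Fˣ) (a : ℕ) :
    Matrix (Fin (r * μ + 2)) (Fin (μ * n)) F :=
  fun v c =>
    if (v : ℕ) < r * μ then
      if (c : ℕ) / n = (v : ℕ) / r then
        (((β ^ ((c : ℕ) % n + a / b ^ ((c : ℕ) % n) % b * n)) ^ ((v : ℕ) % r) : Fˣ) : F)
      else 0
    else if (v : ℕ) = r * μ then
      (((β ^ ((c : ℕ) % n + a / b ^ ((c : ℕ) % n) % b * n)) ^ r : Fˣ) : F)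
    else
      ((β ^ (-(((c : ℕ) / n : ℤ) * (N : ℤ))) *
        (β ^ ((c : ℕ) % n + a / b ^ ((c : ℕ) % n) % b * n))⁻¹ : Fˣ) : F)

/-- The `(r, s)` partial-MDS criterion for a matrix with `rμ + s` rows and `μn` columns,
where the columns are partitioned into `μ` local groups `W_i = {c : c / n = i}`:
for every choice of `E_i ⊆ W_i` with `|E_i| = r` and every `s`-element set `Fs` of columns
disjoint from all `E_i`, the square submatrix on the columns `(∪ᵢ E_i) ∪ Fs` is invertible. -/
def pmdsCriterion {F : Type*} [Field F] (μ n r s : ℕ)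
    (H : Matrix (Fin (r * μ + s)) (Fin (μ * n)) F) : Prop :=
  ∀ E : Fin μ → Finset (Fin (μ * n)),
    (∀ i, (E i).card = r) →
    (∀ i, ∀ c ∈ E i, (c : ℕ) / n = (i : ℕ)) →
    ∀ Fs : Finset (Fin (μ * n)),
      Fs.card = s →
      (∀ i, Disjoint Fs (E i)) →
      ∀ e : Fin (r * μ + s) → Fin (μ * n),
        Function.Injective e →
        (Set.range e = ↑(Finset.univ.biUnion E ∪ Fs)) →
        IsUnit (H.submatrix id e).det


open Finset Matrix

/-- Kernel of a (transposed) Vandermonde system: if distinct points satisfy all power-sum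
constraints up to the cardinality, the coefficients vanish. -/
lemma vandermonde_kernel {F : Type*} [Field F] {ι : Type*} [Fintype ι] [DecidableEq ι]
    (s : Finset ι) (x : ι → F) (hx : Set.InjOn x s) (v : ι → F)
    (h : ∀ u < s.card, ∑ j ∈ s, v j * x j ^ u = 0) :
    ∀ j ∈ s, v j = 0 := by
  classical
  intro j0 hj0
  by_contra hvj
  set k := s.card with hk
  set g : Fin k → ι := fun i => (s.equivFin.symm i : ι) with hg
  have hg_mem : ∀ i, g i ∈ s := fun i => (s.equivFin.symm i).2
  have hg_inj : Function.Injective g := by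
    intro i1 i2 h12
    exact s.equivFin.symm.injective (Subtype.ext h12)
  have hy_inj : Function.Injective (x ∘ g) := by
    intro i1 i2 h12
    exact hg_inj (hx (hg_mem i1) (hg_mem i2) h12)
  set A : Matrix (Fin k) (Fin k) F := (Matrix.vandermonde (x ∘ g))ᵀ with hA
  have hdet : A.det ≠ 0 := by
    rw [hA, Matrix.det_transpose, Matrix.det_vandermonde]
    apply Finset.prod_ne_zero_iff.mpr
    intro i _
    apply Finset.prod_ne_zero_iff.mpr
    intro j hj
    have hij : i ≠ j := ne_of_lt (Finset.mem_Ioi.mp hj)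
    exact sub_ne_zero_of_ne fun hc => hij (hy_inj hc).symm
  set w : Fin k → F := fun i => v (g i) with hw
  have hsum : ∀ u < k, ∑ i : Fin k, w i * (x (g i)) ^ u = 0 := by
    intro u hu
    have := h u hu
    rw [← Finset.sum_attach s (fun j => v j * x j ^ u)] at this
    exact (Fintype.sum_equiv s.equivFin.symm (fun i => w i * x (g i) ^ u)
      (fun j => v (j : ι) * x (j : ι) ^ u) (fun i => rfl)).trans this
  have hmv : A *ᵥ w = 0 := by
    funext u
    simp only [Matrix.mulVec, dotProduct, hA, Matrix.transpose_apply,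
      Matrix.vandermonde, Pi.zero_apply]
    rw [← hsum u u.2]
    apply Finset.sum_congr rfl
    intro i _
    exact mul_comm _ _
  have : A.det = 0 := by
    apply Matrix.exists_mulVec_eq_zero_iff.mp
    refine ⟨w, ?_, hmv⟩
    intro hw0
    apply hvj
    have : w (s.equivFin ⟨j0, hj0⟩) = 0 := by rw [hw0]; rfl
    simpa [hw, hg] using this
  exact hdet this

open Polynomial in
/-- Divided-difference identity: with `r+1` points (not necessarily distinct) and all
power sums up to `r-1` vanishing, the inverse-power sum is determined by the `r`-th. -/
lemma divided_diff {F : Type*} [Field F] {ι : Type*} [DecidableEq ι]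
    (s : Finset ι) (r : ℕ) (hcard : s.card = r + 1) (x : ι → Fˣ) (v : ι → F)
    (h : ∀ u < r, ∑ j ∈ s, v j * (x j : F) ^ u = 0) :
    (∏ j ∈ s, (x j : F)) * (∑ j ∈ s, v j * ((x j : F))⁻¹) =
      (-1 : F) ^ r * ∑ j ∈ s, v j * (x j : F) ^ r := by
  classical
  set c : ι → F := fun j => (x j : F) with hc
  have hc0 : ∀ j, c j ≠ 0 := fun j => (x j).ne_zero
  set PP : F := ∏ j ∈ s, c j with hPP
  set P : F[X] := ∏ j ∈ s, (X - C (c j)) with hP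
  have hPmonic : P.Monic := monic_prod_of_monic _ _ fun j _ => monic_X_sub_C (c j)
  have hPdeg : P.natDegree = r + 1 := by
    rw [hP, natDegree_prod _ _ (fun j _ => X_sub_C_ne_zero (c j))]
    simp [hcard]
  have hPeval : ∀ j ∈ s, P.eval (c j) = 0 := by
    intro j hj
    rw [hP, eval_prod]
    exact Finset.prod_eq_zero hj (by simp)
  have hPcoeff0 : P.coeff 0 = (-1 : F) ^ (r + 1) * PP := by
    rw [coeff_zero_eq_eval_zero, hP, eval_prod]
    simp only [eval_sub, eval_X, eval_C, zero_sub]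
    rw [show (fun j => -c j) = (fun j => (-1 : F) * c j) by funext j; ring]
    rw [Finset.prod_mul_distrib, Finset.prod_const, hcard]
  have hPtop : P.coeff (r + 1) = 1 := by
    have := hPmonic.leadingCoeff
    rwa [leadingCoeff, hPdeg] at this
  set G : F[X] := C PP - C ((-1 : F) ^ r) * (X ^ (r + 1) - P) with hG
  have hGdeg : G.natDegree < r + 2 := by
    have h1 : (X ^ (r + 1) - P : F[X]).natDegree ≤ r + 1 := by
      apply le_trans (natDegree_sub_le _ _)
      simp [hPdeg]
    have h2 : (C ((-1 : F) ^ r) * (X ^ (r + 1) - P)).natDegree ≤ r + 1 := by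
      apply le_trans (natDegree_mul_le)
      simpa using h1
    have h3 := natDegree_sub_le (C PP) (C ((-1 : F) ^ r) * (X ^ (r + 1) - P))
    have h4 : G.natDegree ≤ r + 1 :=
      le_trans h3 (max_le (by simp) h2)
    omega
  have hGcoeff0 : G.coeff 0 = 0 := by
    rw [hG]
    simp only [coeff_sub, coeff_C_mul, coeff_C_zero, coeff_X_pow, hPcoeff0]
    rw [if_neg (by omega : ¬ (0 = r + 1))]
    have h4 : ((-1 : F)) ^ r * ((-1 : F)) ^ (r + 1) = -1 := by
      rw [← pow_add, show r + (r + 1) = 2 * r + 1 by ring, pow_succ, pow_mul]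
      simp
    linear_combination PP * h4
  have hGcoefftop : G.coeff (r + 1) = 0 := by
    rw [hG]
    simp only [coeff_sub, coeff_C_mul, coeff_sub, coeff_X_pow, hPtop, coeff_C]
    simp
  have hGeval : ∀ j ∈ s, G.eval (c j) = PP - (-1 : F) ^ r * (c j) ^ (r + 1) := by
    intro j hj
    rw [hG]
    simp [hPeval j hj]
  -- the key sum
  have hkey : ∑ j ∈ s, v j * (c j)⁻¹ * G.eval (c j) = 0 := by
    have heval : ∀ j, G.eval (c j) = ∑ u ∈ Finset.range (r + 2), G.coeff u * (c j) ^ u :=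
      fun j => eval_eq_sum_range' hGdeg (c j)
    calc ∑ j ∈ s, v j * (c j)⁻¹ * G.eval (c j)
        = ∑ j ∈ s, ∑ u ∈ Finset.range (r + 2), v j * (c j)⁻¹ * (G.coeff u * (c j) ^ u) := by
          apply Finset.sum_congr rfl; intro j _
          rw [heval j, Finset.mul_sum]
      _ = ∑ u ∈ Finset.range (r + 2), ∑ j ∈ s, v j * (c j)⁻¹ * (G.coeff u * (c j) ^ u) :=
          Finset.sum_comm
      _ = ∑ u ∈ Finset.range (r + 1), ∑ j ∈ s, v j * (c j)⁻¹ * (G.coeff (u + 1) * (c j) ^ (u + 1))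
            + ∑ j ∈ s, v j * (c j)⁻¹ * (G.coeff 0 * (c j) ^ 0) := by
          rw [Finset.sum_range_succ']
      _ = ∑ u ∈ Finset.range (r + 1), G.coeff (u + 1) * ∑ j ∈ s, v j * (c j) ^ u := by
          rw [hGcoeff0]
          simp only [zero_mul, mul_zero, Finset.sum_const_zero, add_zero]
          apply Finset.sum_congr rfl; intro u _
          rw [Finset.mul_sum]
          apply Finset.sum_congr rfl; intro j _
          have hc' : (c j)⁻¹ * (c j ^ (u + 1)) = c j ^ u := by
            rw [pow_succ, mul_comm (c j ^ u), ← mul_assoc, inv_mul_cancel₀ (hc0 j), one_mul]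
          calc v j * (c j)⁻¹ * (G.coeff (u + 1) * c j ^ (u + 1))
              = G.coeff (u + 1) * (v j * ((c j)⁻¹ * c j ^ (u + 1))) := by ring
            _ = G.coeff (u + 1) * (v j * c j ^ u) := by rw [hc']
      _ = 0 := by
          rw [Finset.sum_range_succ, hGcoefftop]
          simp only [zero_mul, add_zero]
          apply Finset.sum_eq_zero; intro u hu
          rw [h u (Finset.mem_range.mp hu), mul_zero]
  rw [Finset.sum_congr rfl (fun j hj => by rw [hGeval j hj])] at hkey
  have expand : ∀ j ∈ s, v j * (c j)⁻¹ * (PP - (-1:F) ^ r * (c j) ^ (r+1))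
      = PP * (v j * (c j)⁻¹) - (-1:F) ^ r * (v j * (c j) ^ r) := by
    intro j hj
    have hc' : (c j)⁻¹ * (c j ^ (r + 1)) = c j ^ r := by
      rw [pow_succ, mul_comm (c j ^ r), ← mul_assoc, inv_mul_cancel₀ (hc0 j), one_mul]
    calc v j * (c j)⁻¹ * (PP - (-1 : F) ^ r * c j ^ (r + 1))
        = PP * (v j * (c j)⁻¹) - (-1 : F) ^ r * (v j * ((c j)⁻¹ * c j ^ (r + 1))) := by ring
      _ = _ := by rw [hc']
  rw [Finset.sum_congr rfl expand, Finset.sum_sub_distrib, ← Finset.mul_sum, ← Finset.mul_sum,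
    sub_eq_zero] at hkey
  exact hkey

/-- Extended Vandermonde kernel: `r+2` distinct nonzero points, power sums `0..r` and the
inverse-power sum all vanish, then all coefficients vanish. -/
lemma kernel_ext {F : Type*} [Field F] {ι : Type*} [Fintype ι] [DecidableEq ι]
    (s : Finset ι) (r : ℕ) (hcard : s.card = r + 2) (x : ι → Fˣ)
    (hinj : Set.InjOn (fun j => (x j : F)) s) (v : ι → F)
    (h1 : ∀ u ≤ r, ∑ j ∈ s, v j * (x j : F) ^ u = 0)
    (h2 : ∑ j ∈ s, v j * ((x j : F))⁻¹ = 0) :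
    ∀ j ∈ s, v j = 0 := by
  classical
  set w : ι → F := fun j => v j * ((x j : F))⁻¹ with hw
  have hker : ∀ j ∈ s, w j = 0 := by
    apply vandermonde_kernel s (fun j => (x j : F)) hinj w
    intro u hu
    rw [hcard] at hu
    match u, hu with
    | 0, _ => simpa using h2
    | (u' + 1), hu =>
      have hu' : u' ≤ r := by omega
      have := h1 u' hu'
      rw [← this]
      apply Finset.sum_congr rfl
      intro j _
      have hc0 : ((x j : F)) ≠ 0 := (x j).ne_zero
      show v j * ((x j : F))⁻¹ * (x j : F) ^ (u' + 1) = v j * (x j : F) ^ u'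
      rw [pow_succ']
      field_simp
  intro j hj
  have := hker j hj
  rw [hw] at this
  simp only at this
  rcases mul_eq_zero.mp this with h | h
  · exact h
  · exact absurd h (by simp [(x j).ne_zero])

/-- Sum of `k` distinct naturals is at least `0 + 1 + ⋯ + (k-1)`. -/
lemma sum_range_card_le_sum (s : Finset ℕ) : ∑ i ∈ Finset.range s.card, i ≤ ∑ i ∈ s, i := by
  classical
  induction s using Finset.strongInduction with
  | _ s ih =>
    rcases Finset.eq_empty_or_nonempty s with rfl | hs
    · simp
    · have hmax := s.max'_mem hs
      set m := s.max' hs with hm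
      have hsub : s.erase m ⊂ s := Finset.erase_ssubset hmax
      have hcard : (s.erase m).card = s.card - 1 := Finset.card_erase_of_mem hmax
      have h1 : s.card - 1 ≤ m := by
        have : s ⊆ Finset.range (m + 1) := by
          intro i hi
          exact Finset.mem_range.mpr (Nat.lt_succ_of_le (s.le_max' i hi))
        have := Finset.card_le_card this
        simp at this
        omega
      have h2 := ih (s.erase m) hsub
      rw [hcard] at h2
      have h3 : ∑ i ∈ s, i = m + ∑ i ∈ s.erase m, i := (Finset.add_sum_erase s id hmax).symm
      have h4 : s.card = (s.card - 1) + 1 := by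
        have : 0 < s.card := Finset.card_pos.mpr hs
        omega
      rw [h3, h4, Finset.sum_range_succ]
      omega

/-- Sum of `k` distinct naturals below `n` is at most `(n-k) + ⋯ + (n-1)`. -/
lemma sum_le_of_subset_range (s : Finset ℕ) (n : ℕ) (h : s ⊆ Finset.range n) :
    ∑ i ∈ s, i + ∑ i ∈ Finset.range (n - s.card), i ≤ ∑ i ∈ Finset.range n, i := by
  classical
  have hsplit : ∑ i ∈ s, i + ∑ i ∈ Finset.range n \ s, i = ∑ i ∈ Finset.range n, i := by
    rw [add_comm]
    exact Finset.sum_sdiff h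
  have hcard : (Finset.range n \ s).card = n - s.card := by
    rw [Finset.card_sdiff_of_subset h, Finset.card_range]
  have := sum_range_card_le_sum (Finset.range n \ s)
  rw [hcard] at this
  omega

/-- Gauss-type shift: `∑_{i<m+k} i = ∑_{i<m} i + k*m + ∑_{i<k} i`. -/
lemma sum_range_add_id (m k : ℕ) :
    ∑ i ∈ Finset.range (m + k), i = (∑ i ∈ Finset.range m, i) + k * m + ∑ i ∈ Finset.range k, i := by
  induction k with
  | zero => simp
  | succ k ih =>
    rw [show m + (k + 1) = (m + k) + 1 by ring, Finset.sum_range_succ, ih,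
      Finset.sum_range_succ]
    ring

/-- Distinct powers below the order. -/
lemma pow_ne_pow_of_lt_orderOf {G : Type*} [Group G] (β : G) {p q : ℕ}
    (hpq : p ≠ q) (hp : p < orderOf β) (hq : q < orderOf β) : β ^ p ≠ β ^ q := by
  intro h
  rcases hpq.lt_or_gt with hlt | hlt
  · have : β ^ (q - p) = 1 := by
      have := mul_inv_eq_one.mpr h.symm
      rw [← pow_sub β hlt.le] at this
      exact this
    have hd := orderOf_dvd_of_pow_eq_one this
    have := Nat.le_of_dvd (by omega) hd
    omega
  · have : β ^ (p - q) = 1 := by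
      have := mul_inv_eq_one.mpr h
      rw [← pow_sub β hlt.le] at this
      exact this
    have hd := orderOf_dvd_of_pow_eq_one this
    have := Nat.le_of_dvd (by omega) hd
    omega


set_option maxHeartbeats 2000000 in
/-- Key exponent gap argument: the combined exponent cannot be divisible by the order. -/
lemma key_exponent_bound (μ N ord g1 g2 L S1 S2 : ℕ)
    (hμ1 : g1 < μ) (hμ2 : g2 < μ) (hne : g1 ≠ g2) (hN1 : 1 ≤ N) (hord : μ * N ≤ ord)
    (hc1 : L ≤ S1) (hc2 : S1 ≤ L + (N - 1)) (hc3 : L ≤ S2) (hc4 : S2 ≤ L + (N - 1))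
    (hdvd : (ord : ℤ) ∣ (((S2 : ℤ) - (g1 : ℤ) * (N : ℤ)) - ((S1 : ℤ) - (g2 : ℤ) * (N : ℤ)))) :
    False := by
  set m : ℤ := ((S2 : ℤ) - (g1 : ℤ) * (N : ℤ)) - ((S1 : ℤ) - (g2 : ℤ) * (N : ℤ)) with hm
  have hNnn : (0 : ℤ) ≤ (N : ℤ) := by positivity
  have hNz : (1 : ℤ) ≤ (N : ℤ) := by exact_mod_cast hN1
  have hcz1 : (L : ℤ) ≤ (S1 : ℤ) := by exact_mod_cast hc1
  have hcz3 : (L : ℤ) ≤ (S2 : ℤ) := by exact_mod_cast hc3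
  have hcz2 : (S1 : ℤ) ≤ (L : ℤ) + ((N : ℤ) - 1) := by
    have h := hc2
    have : ((L + (N - 1) : ℕ) : ℤ) = (L : ℤ) + ((N : ℤ) - 1) := by
      push_cast
      omega
    calc (S1 : ℤ) ≤ ((L + (N - 1) : ℕ) : ℤ) := by exact_mod_cast h
      _ = _ := this
  have hcz4 : (S2 : ℤ) ≤ (L : ℤ) + ((N : ℤ) - 1) := by
    have h := hc4
    have : ((L + (N - 1) : ℕ) : ℤ) = (L : ℤ) + ((N : ℤ) - 1) := by
      push_cast
      omega
    calc (S2 : ℤ) ≤ ((L + (N - 1) : ℕ) : ℤ) := by exact_mod_cast h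
      _ = _ := this
  have hordz : (μ : ℤ) * (N : ℤ) ≤ (ord : ℤ) := by exact_mod_cast hord
  have habs : (1 : ℤ) ≤ |m| ∧ |m| ≤ (μ : ℤ) * (N : ℤ) - 1 := by
    rcases Nat.lt_or_ge g1 g2 with hlt | hge
    · have hγ1 : (1 : ℤ) ≤ (g2 : ℤ) - (g1 : ℤ) := by
        have : (g1 : ℤ) < (g2 : ℤ) := by exact_mod_cast hlt
        linarith
      have hγ2 : (g2 : ℤ) - (g1 : ℤ) ≤ (μ : ℤ) - 1 := by
        have h1 : (g2 : ℤ) < (μ : ℤ) := by exact_mod_cast hμ2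
        have h2 : (0 : ℤ) ≤ (g1 : ℤ) := Int.natCast_nonneg _
        linarith
      have hmul1 : (N : ℤ) ≤ (g2 : ℤ) * (N : ℤ) - (g1 : ℤ) * (N : ℤ) := by
        nlinarith [mul_nonneg (sub_nonneg.mpr hγ1) hNnn]
      have hmul2 : (g2 : ℤ) * (N : ℤ) - (g1 : ℤ) * (N : ℤ) ≤ (μ : ℤ) * (N : ℤ) - (N : ℤ) := by
        nlinarith [mul_nonneg (sub_nonneg.mpr hγ2) hNnn]
      have hmpos : (1 : ℤ) ≤ m := by rw [hm]; linarith
      have hmle : m ≤ (μ : ℤ) * (N : ℤ) - 1 := by rw [hm]; linarith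
      rw [abs_of_pos (by linarith : (0 : ℤ) < m)]
      exact ⟨hmpos, hmle⟩
    · have hlt' : g2 < g1 := by omega
      have hγ1 : (1 : ℤ) ≤ (g1 : ℤ) - (g2 : ℤ) := by
        have : (g2 : ℤ) < (g1 : ℤ) := by exact_mod_cast hlt'
        linarith
      have hγ2 : (g1 : ℤ) - (g2 : ℤ) ≤ (μ : ℤ) - 1 := by
        have h1 : (g1 : ℤ) < (μ : ℤ) := by exact_mod_cast hμ1
        have h2 : (0 : ℤ) ≤ (g2 : ℤ) := Int.natCast_nonneg _
        linarith
      have hmul1 : (N : ℤ) ≤ (g1 : ℤ) * (N : ℤ) - (g2 : ℤ) * (N : ℤ) := by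
        nlinarith [mul_nonneg (sub_nonneg.mpr hγ1) hNnn]
      have hmul2 : (g1 : ℤ) * (N : ℤ) - (g2 : ℤ) * (N : ℤ) ≤ (μ : ℤ) * (N : ℤ) - (N : ℤ) := by
        nlinarith [mul_nonneg (sub_nonneg.mpr hγ2) hNnn]
      have hmneg : m ≤ -1 := by rw [hm]; linarith
      have hmge : -((μ : ℤ) * (N : ℤ) - 1) ≤ m := by rw [hm]; linarith
      rw [abs_of_neg (by linarith : m < 0)]
      constructor <;> linarith
  have hle := Int.le_of_dvd (by linarith [habs.1] : (0 : ℤ) < |m|) ((dvd_abs _ _).mpr hdvd)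
  linarith [habs.2]

set_option maxHeartbeats 4000000 in
/-- Let `μ, n, r, d` be positive integers with `r ≤ n` and
`n−r ≤ d ≤ n−1`, set `b = d+1−(n−r)`, `N = (r+1)(rn−1−r)+1`, and let `q = 2^w` satisfy
`q ≥ max{μN, bn}`. Let `β ∈ GF(q)` have multiplicative order at least `max{μN, bn}` and
set `β_{i,j} = β^((i−1)+(j−1)n)`.  Then for every `a ∈ {0, …, b^n − 1}` the matrix
`H^(a)` of Construction 1 satisfies the `(r, s = 2)` partial-MDS criterion. -/
theorem statement2 (w μ n r d b N : ℕ)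
    (hw : 0 < w) (hμ : 0 < μ) (hn : 0 < n) (hr : 0 < r) (hd : 0 < d)
    (hrn : r ≤ n) (hdl : n - r ≤ d) (hdh : d ≤ n - 1)
    (hb : b = d + 1 - (n - r))
    (hN : N = (r + 1) * (r * n - 1 - r) + 1)
    (F : Type*) [Field F] [Fintype F] (hF : Fintype.card F = 2 ^ w)
    (hq : max (μ * N) (b * n) ≤ 2 ^ w)
    (β : Fˣ) (hβ : max (μ * N) (b * n) ≤ orderOf β)
    (a : ℕ) (ha : a < b ^ n) :
    pmdsCriterion μ n r 2 (construction1H μ n r N b hn β a) := by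
  classical
  intro E hEcard hEgroup Fs hFscard hdisj e he_inj he_range
  -- arithmetic preliminaries
  have hb1 : 1 ≤ b := by omega
  have hbr : b ≤ r := by omega
  have hN1 : 1 ≤ N := by omega
  have hbn : b * n ≤ orderOf β := le_trans (le_max_right _ _) hβ
  have hμN : μ * N ≤ orderOf β := le_trans (le_max_left _ _) hβ
  have hcard_le : r * μ + 2 ≤ μ * n := by
    have := Fintype.card_le_of_injective e he_inj
    simpa using this
  have hrn' : r + 1 ≤ n := by
    by_contra hcon
    push_neg at hcon
    have h1 : μ * n ≤ μ * r := Nat.mul_le_mul_left μ (by omega)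
    have h2 : μ * r = r * μ := Nat.mul_comm _ _
    omega
  -- local notation
  set gp : Fin (r * μ + 2) → ℕ := fun j => (e j : ℕ) / n with hgp
  set tt : Fin (r * μ + 2) → ℕ := fun j => (e j : ℕ) % n with htt
  set ex : Fin (r * μ + 2) → ℕ := fun j => tt j + a / b ^ (tt j) % b * n with hex
  set x : Fin (r * μ + 2) → Fˣ := fun j => β ^ (ex j) with hx
  have hgpμ : ∀ j, gp j < μ := fun j => (Nat.div_lt_iff_lt_mul hn).mpr (e j).2
  have htn : ∀ j, tt j < n := fun j => Nat.mod_lt _ hn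
  have hab : ∀ j, a / b ^ (tt j) % b ≤ b - 1 := by
    intro j
    have := Nat.mod_lt (a / b ^ (tt j)) (show 0 < b by omega)
    omega
  have hexbn : ∀ j, ex j < b * n := by
    intro j
    have h1 := hab j
    have h2 := htn j
    have h3 : a / b ^ (tt j) % b * n ≤ (b - 1) * n := Nat.mul_le_mul_right n h1
    have h4 : (b - 1) * n + n = b * n := by
      have : (b - 1) + 1 = b := by omega
      calc (b - 1) * n + n = ((b - 1) + 1) * n := by ring
        _ = b * n := by rw [this]
    rw [hex]
    simp only
    omega
  set T : ℕ → Finset (Fin (r * μ + 2)) := fun g => Finset.univ.filter (fun j => gp j = g)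
    with hT
  have hmemT : ∀ g j, j ∈ T g ↔ gp j = g := by
    intro g j
    rw [hT]
    simp
  -- recovering e j from gp j and tt j
  have hejval : ∀ j, (e j : ℕ) = n * gp j + tt j := by
    intro j
    rw [hgp, htt]
    exact (Nat.div_add_mod _ _).symm
  -- x is injective on each group
  have hexinj : ∀ g : ℕ, ∀ j ∈ T g, ∀ j' ∈ T g, ex j = ex j' → j = j' := by
    intro g j hj j' hj' hexx
    have htj : tt j = tt j' := by
      have h1 : ex j % n = tt j := by
        rw [hex]; simp only; rw [Nat.add_mul_mod_self_right]; exact Nat.mod_eq_of_lt (htn j)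
      have h2 : ex j' % n = tt j' := by
        rw [hex]; simp only; rw [Nat.add_mul_mod_self_right]; exact Nat.mod_eq_of_lt (htn j')
      rw [← h1, ← h2, hexx]
    apply he_inj
    apply Fin.ext
    rw [hejval j, hejval j', htj, (hmemT g j).mp hj, (hmemT g j').mp hj']
  have hxinj : ∀ g : ℕ, Set.InjOn (fun j => ((x j : Fˣ) : F)) (T g) := by
    intro g j hj j' hj' hxx
    simp only at hxx
    have hux : x j = x j' := Units.ext hxx
    apply hexinj g j (by exact_mod_cast hj) j' (by exact_mod_cast hj')
    by_contra hne
    exact pow_ne_pow_of_lt_orderOf β hne (lt_of_lt_of_le (hexbn j) hbn)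
      (lt_of_lt_of_le (hexbn j') hbn) hux
  -- cardinality of the groups
  have hTcard : ∀ g, (hg : g < μ) →
      (T g).card = r + (Fs.filter (fun (c : Fin (μ * n)) => (c : ℕ) / n = g)).card := by
    intro g hg
    have himg : Finset.image e (T g) = E ⟨g, hg⟩ ∪ Fs.filter (fun (c : Fin (μ * n)) => (c : ℕ) / n = g) := by
      ext c
      simp only [Finset.mem_image, Finset.mem_union, Finset.mem_filter]
      constructor
      · rintro ⟨j, hj, rfl⟩
        have hj' : gp j = g := (hmemT g j).mp hj
        have hcmem : e j ∈ Finset.univ.biUnion E ∪ Fs := by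
          have hmem : e j ∈ Set.range e := ⟨j, rfl⟩
          rw [he_range] at hmem
          exact Finset.mem_coe.mp hmem
        rcases Finset.mem_union.mp hcmem with hmem | hmem
        · obtain ⟨i, _, hi⟩ := Finset.mem_biUnion.mp hmem
          left
          have h1 : ((e j : ℕ)) / n = (i : ℕ) := hEgroup i _ hi
          have h2 : i = ⟨g, hg⟩ := Fin.ext (by rw [← h1]; exact hj')
          rwa [← h2]
        · right
          exact ⟨hmem, hj'⟩
      · intro hc
        have hcmem : c ∈ Finset.univ.biUnion E ∪ Fs := by
          rcases hc with h | h
          · exact Finset.mem_union_left _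
              (Finset.mem_biUnion.mpr ⟨⟨g, hg⟩, Finset.mem_univ _, h⟩)
          · exact Finset.mem_union_right _ h.1
        have hcr : c ∈ Set.range e := by
          rw [he_range]
          exact Finset.mem_coe.mpr hcmem
        obtain ⟨j, rfl⟩ := hcr
        refine ⟨j, (hmemT g j).mpr ?_, rfl⟩
        rcases hc with h | h
        · exact hEgroup ⟨g, hg⟩ _ h
        · exact h.2
    have hcardT : (T g).card = (Finset.image e (T g)).card :=
      (Finset.card_image_of_injective _ he_inj).symm
    have hdisj' : Disjoint (E ⟨g, hg⟩) (Fs.filter (fun (c : Fin (μ * n)) => (c : ℕ) / n = g)) :=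
      Disjoint.mono_right (Finset.filter_subset _ _) (hdisj ⟨g, hg⟩).symm
    rw [hcardT, himg, Finset.card_union_of_disjoint hdisj', hEcard]
  -- pass to a kernel vector
  apply isUnit_iff_ne_zero.mpr
  intro hdet
  obtain ⟨v, hv0, hv⟩ := Matrix.exists_mulVec_eq_zero_iff.mpr hdet
  -- the row equations
  have eq1 : ∀ g u, g < μ → u < r → ∑ j ∈ T g, v j * ((x j : Fˣ) : F) ^ u = 0 := by
    intro g u hg hu
    have hlt : u + g * r < r * μ := by
      have h1 : u + g * r < (g + 1) * r := by
        have : (g + 1) * r = g * r + r := by ring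
        omega
      have h2 : (g + 1) * r ≤ μ * r := Nat.mul_le_mul_right r (by omega)
      have h3 : μ * r = r * μ := Nat.mul_comm _ _
      omega
    have hrow : u + g * r < r * μ + 2 := by omega
    have h0 := congrFun hv ⟨u + g * r, hrow⟩
    have hdiv : (u + g * r) / r = g := by
      rw [Nat.add_mul_div_right u g hr, Nat.div_eq_of_lt hu, Nat.zero_add]
    have hmod : (u + g * r) % r = u := by
      rw [Nat.add_mul_mod_self_right]
      exact Nat.mod_eq_of_lt hu
    simp only [Matrix.mulVec, dotProduct, Matrix.submatrix_apply, id_eq,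
      construction1H, Pi.zero_apply, hlt, if_true, hdiv, hmod] at h0
    simp only [hT]
    rw [Finset.sum_filter]
    refine (Finset.sum_congr rfl fun j _ => ?_).trans h0
    simp only [hgp, hx, hex, htt, Units.val_pow_eq_pow_val]
    by_cases hc : (e j : ℕ) / n = g
    · simp [hc, mul_comm]
    · simp [hc]
  have eq2 : ∑ j : Fin (r * μ + 2), v j * ((x j : Fˣ) : F) ^ r = 0 := by
    have hrow : r * μ < r * μ + 2 := by omega
    have h0 := congrFun hv ⟨r * μ, hrow⟩
    simp only [Matrix.mulVec, dotProduct, Matrix.submatrix_apply, id_eq,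
      construction1H, Pi.zero_apply, lt_irrefl, if_false, if_true] at h0
    refine (Finset.sum_congr rfl fun j _ => ?_).trans h0
    simp only [hx, hex, htt, Units.val_pow_eq_pow_val]
    exact mul_comm _ _
  have eq3 : ∑ j : Fin (r * μ + 2),
      v j * ((β ^ (-((gp j : ℤ) * (N : ℤ))) : Fˣ) : F) * (((x j : Fˣ) : F))⁻¹ = 0 := by
    have hrow : r * μ + 1 < r * μ + 2 := by omega
    have h0 := congrFun hv ⟨r * μ + 1, hrow⟩
    have hc1 : ¬ (r * μ + 1 < r * μ) := by omega
    have hc2 : ¬ (r * μ + 1 = r * μ) := by omega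
    simp only [Matrix.mulVec, dotProduct, Matrix.submatrix_apply, id_eq,
      construction1H, Pi.zero_apply, hc1, hc2, if_false] at h0
    refine (Finset.sum_congr rfl fun j _ => ?_).trans h0
    have hcast : ((e j : ℕ) : ℤ) / (n : ℤ) = ((gp j : ℕ) : ℤ) := by
      rw [hgp]
      exact (Int.natCast_div _ _).symm
    simp only [hcast, hgp, hx, hex, htt, Units.val_mul, Units.val_inv_eq_inv_val]
    ring
  -- vanishing on groups with no extra column
  have hvz : ∀ j, (Fs.filter (fun (c : Fin (μ * n)) => (c : ℕ) / n = gp j)).card = 0 → v j = 0 := by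
    intro j hfc
    have hg := hgpμ j
    have hc := hTcard (gp j) hg
    rw [hfc, add_zero] at hc
    exact vandermonde_kernel (T (gp j)) _ (hxinj (gp j)) v
      (fun u hu => eq1 (gp j) u hg (by omega)) j ((hmemT _ j).mpr rfl)
  -- the two extra columns
  obtain ⟨f1, f2, hf12, hFs⟩ := Finset.card_eq_two.mp hFscard
  set g1 : ℕ := (f1 : ℕ) / n with hg1
  set g2 : ℕ := (f2 : ℕ) / n with hg2
  have hg1μ : g1 < μ := (Nat.div_lt_iff_lt_mul hn).mpr f1.2
  have hg2μ : g2 < μ := (Nat.div_lt_iff_lt_mul hn).mpr f2.2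
  -- exponent sum bounds for groups of size r+1
  have hSbound : ∀ g, (hg : g < μ) → (T g).card = r + 1 →
      (∑ i ∈ Finset.range (r + 1), i) ≤ (∑ j ∈ T g, ex j) ∧
      (∑ j ∈ T g, ex j) ≤ (∑ i ∈ Finset.range (r + 1), i) + (N - 1) := by
    intro g hg hcard
    have httinj : ∀ j ∈ T g, ∀ j' ∈ T g, tt j = tt j' → j = j' := by
      intro j hj j' hj' htj
      apply he_inj
      apply Fin.ext
      rw [hejval j, hejval j', htj, (hmemT g j).mp hj, (hmemT g j').mp hj']
    set s : Finset ℕ := (T g).image tt with hs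
    have hscard : s.card = r + 1 := by
      rw [hs, Finset.card_image_of_injOn (fun j hj j' hj' => httinj j hj j' hj'), hcard]
    have hsum_tt : ∑ j ∈ T g, tt j = ∑ i ∈ s, i := by
      rw [hs, Finset.sum_image (fun j hj j' hj' => httinj j hj j' hj')]
    have hsplit : ∑ j ∈ T g, ex j = (∑ j ∈ T g, tt j) + ∑ j ∈ T g, a / b ^ (tt j) % b * n := by
      rw [← Finset.sum_add_distrib]
    have hlow : ∑ i ∈ Finset.range (r + 1), i ≤ ∑ i ∈ s, i := by
      have := sum_range_card_le_sum s
      rwa [hscard] at this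
    have hsub : s ⊆ Finset.range n := by
      intro i hi
      obtain ⟨j, _, rfl⟩ := Finset.mem_image.mp hi
      exact Finset.mem_range.mpr (htn j)
    have hup1 : ∑ i ∈ s, i + ∑ i ∈ Finset.range (n - (r + 1)), i ≤ ∑ i ∈ Finset.range n, i := by
      have := sum_le_of_subset_range s n hsub
      rwa [hscard] at this
    have hup2 : ∑ j ∈ T g, a / b ^ (tt j) % b * n ≤ (r + 1) * ((b - 1) * n) := by
      have h1 : ∀ j ∈ T g, a / b ^ (tt j) % b * n ≤ (b - 1) * n :=
        fun j _ => Nat.mul_le_mul_right n (hab j)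
      have := Finset.sum_le_card_nsmul (T g) _ ((b - 1) * n) h1
      rwa [hcard, smul_eq_mul] at this
    have hgauss : ∑ i ∈ Finset.range n, i
        = (∑ i ∈ Finset.range (n - (r + 1)), i) + (r + 1) * (n - (r + 1))
          + ∑ i ∈ Finset.range (r + 1), i := by
      have h1 : n = (n - (r + 1)) + (r + 1) := by omega
      rw [h1]
      rw [sum_range_add_id (n - (r + 1)) (r + 1)]
      have h2 : (n - (r + 1)) + (r + 1) - (r + 1) = n - (r + 1) := by omega
      rw [h2]
    have hkey : (n - (r + 1)) + (b - 1) * n ≤ r * n - 1 - r := by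
      have h5 : (b - 1) * n + n = b * n := by
        have hh : (b - 1) + 1 = b := by omega
        calc (b - 1) * n + n = ((b - 1) + 1) * n := by ring
          _ = b * n := by rw [hh]
      have h6 : b * n ≤ r * n := Nat.mul_le_mul_right n hbr
      omega
    have hprod : (r + 1) * ((n - (r + 1)) + (b - 1) * n) ≤ (r + 1) * (r * n - 1 - r) :=
      Nat.mul_le_mul_left (r + 1) hkey
    have hexpand : (r + 1) * ((n - (r + 1)) + (b - 1) * n)
        = (r + 1) * (n - (r + 1)) + (r + 1) * ((b - 1) * n) := Nat.mul_add _ _ _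
    have hNval : N - 1 = (r + 1) * (r * n - 1 - r) := by omega
    constructor
    · have : ∑ j ∈ T g, tt j ≤ ∑ j ∈ T g, ex j := by
        apply Finset.sum_le_sum
        intro j _
        rw [hex]
        simp only
        omega
      omega
    · omega
  by_cases hgeq : g1 = g2
  · -- both extra columns in the same group
    have hvz1 : ∀ j, gp j ≠ g1 → v j = 0 := by
      intro j hne
      apply hvz j
      have h1 : ¬ ((f1 : ℕ) / n = gp j) := fun h => hne (by rw [hg1]; exact h.symm)
      have h2 : ¬ ((f2 : ℕ) / n = gp j) := fun h => hne (by rw [hgeq, hg2]; exact h.symm)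
      rw [hFs, Finset.filter_insert, if_neg h1, Finset.filter_singleton, if_neg h2]
      simp
    have hT1card : (T g1).card = r + 2 := by
      have hfilter : Fs.filter (fun (c : Fin (μ * n)) => (c : ℕ) / n = g1) = {f1, f2} := by
        rw [hFs, Finset.filter_insert, if_pos hg1.symm, Finset.filter_singleton,
          if_pos (by rw [← hg2, ← hgeq])]
      rw [hTcard g1 hg1μ, hfilter, Finset.card_insert_of_notMem (by simp [hf12]),
        Finset.card_singleton]
    have hsub1 : ∀ (f : Fin (r * μ + 2) → F), (∀ j, gp j ≠ g1 → f j = 0) →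
        ∑ j ∈ T g1, f j = ∑ j, f j := by
      intro f hf
      apply Finset.sum_subset (Finset.subset_univ _)
      intro j _ hj
      exact hf j (fun hc => hj ((hmemT g1 j).mpr hc))
    have eq2' : ∑ j ∈ T g1, v j * ((x j : Fˣ) : F) ^ r = 0 := by
      rw [hsub1 _ (fun j hj => by rw [hvz1 j hj, zero_mul])]
      exact eq2
    have heq3r : ∑ j ∈ T g1,
        v j * ((β ^ (-((g1 : ℤ) * (N : ℤ))) : Fˣ) : F) * (((x j : Fˣ) : F))⁻¹ = 0 := by
      have h2 : ∑ j ∈ T g1,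
          v j * ((β ^ (-((gp j : ℤ) * (N : ℤ))) : Fˣ) : F) * (((x j : Fˣ) : F))⁻¹ = 0 := by
        rw [hsub1 _ (fun j hj => by rw [hvz1 j hj, zero_mul, zero_mul])]
        exact eq3
      rw [← h2]
      apply Finset.sum_congr rfl
      intro j hj
      rw [(hmemT g1 j).mp hj]
    have eq3' : ∑ j ∈ T g1, v j * (((x j : Fˣ) : F))⁻¹ = 0 := by
      have h3 : ((β ^ (-((g1 : ℤ) * (N : ℤ))) : Fˣ) : F)
          * ∑ j ∈ T g1, v j * (((x j : Fˣ) : F))⁻¹ = 0 := by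
        rw [Finset.mul_sum, ← heq3r]
        apply Finset.sum_congr rfl
        intro j _
        ring
      rcases mul_eq_zero.mp h3 with h | h
      · exact absurd h (Units.ne_zero _)
      · exact h
    have hker := kernel_ext (T g1) r hT1card x (hxinj g1) v
      (by
        intro u hu
        rcases Nat.lt_or_ge u r with h | h
        · exact eq1 g1 u hg1μ h
        · have hur : u = r := by omega
          rw [hur]; exact eq2')
      eq3'
    apply hv0
    funext j
    simp only [Pi.zero_apply]
    by_cases hj : gp j = g1
    · exact hker j ((hmemT g1 j).mpr hj)
    · exact hvz1 j hj
  · -- extra columns in different groups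
    have hvz2 : ∀ j, gp j ≠ g1 → gp j ≠ g2 → v j = 0 := by
      intro j hne1 hne2
      apply hvz j
      have h1 : ¬ ((f1 : ℕ) / n = gp j) := fun h => hne1 (by rw [hg1]; exact h.symm)
      have h2 : ¬ ((f2 : ℕ) / n = gp j) := fun h => hne2 (by rw [hg2]; exact h.symm)
      rw [hFs, Finset.filter_insert, if_neg h1, Finset.filter_singleton, if_neg h2]
      simp
    have hT1card : (T g1).card = r + 1 := by
      have hfilter : Fs.filter (fun (c : Fin (μ * n)) => (c : ℕ) / n = g1) = {f1} := by
        rw [hFs, Finset.filter_insert, if_pos hg1.symm, Finset.filter_singleton,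
          if_neg (fun h => hgeq (by rw [hg1, hg2]; exact h.symm))]
        simp
      rw [hTcard g1 hg1μ, hfilter, Finset.card_singleton]
    have hT2card : (T g2).card = r + 1 := by
      have hfilter : Fs.filter (fun (c : Fin (μ * n)) => (c : ℕ) / n = g2) = {f2} := by
        rw [hFs, Finset.filter_insert, if_neg (fun h => hgeq (by rw [hg1, hg2]; exact h)),
          Finset.filter_singleton, if_pos hg2.symm]
      rw [hTcard g2 hg2μ, hfilter, Finset.card_singleton]
    have hdisjT : Disjoint (T g1) (T g2) := by
      rw [Finset.disjoint_left]
      intro j hj1 hj2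
      exact hgeq (((hmemT g1 j).mp hj1).symm.trans ((hmemT g2 j).mp hj2))
    have hsub2 : ∀ (f : Fin (r * μ + 2) → F), (∀ j, gp j ≠ g1 → gp j ≠ g2 → f j = 0) →
        (∑ j ∈ T g1, f j) + (∑ j ∈ T g2, f j) = ∑ j, f j := by
      intro f hf
      rw [← Finset.sum_union hdisjT]
      apply Finset.sum_subset (Finset.subset_univ _)
      intro j _ hj
      rw [Finset.mem_union] at hj
      push_neg at hj
      exact hf j (fun hc => hj.1 ((hmemT g1 j).mpr hc)) (fun hc => hj.2 ((hmemT g2 j).mpr hc))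
    -- the four quantities
    set A1 : F := ∑ j ∈ T g1, v j * ((x j : Fˣ) : F) ^ r with hA1
    set A2 : F := ∑ j ∈ T g2, v j * ((x j : Fˣ) : F) ^ r with hA2
    set B1 : F := ∑ j ∈ T g1, v j * (((x j : Fˣ) : F))⁻¹ with hB1
    set B2 : F := ∑ j ∈ T g2, v j * (((x j : Fˣ) : F))⁻¹ with hB2
    set U1 : F := ((β ^ (-((g1 : ℤ) * (N : ℤ))) : Fˣ) : F) with hU1
    set U2 : F := ((β ^ (-((g2 : ℤ) * (N : ℤ))) : Fˣ) : F) with hU2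
    set P1 : F := ∏ j ∈ T g1, ((x j : Fˣ) : F) with hP1
    set P2 : F := ∏ j ∈ T g2, ((x j : Fˣ) : F) with hP2
    have eq2' : A1 + A2 = 0 := by
      rw [hA1, hA2, hsub2 _ (fun j h1 h2 => by rw [hvz2 j h1 h2, zero_mul])]
      exact eq2
    have eq3' : U1 * B1 + U2 * B2 = 0 := by
      have h2 : (∑ j ∈ T g1,
            v j * ((β ^ (-((gp j : ℤ) * (N : ℤ))) : Fˣ) : F) * (((x j : Fˣ) : F))⁻¹)
          + (∑ j ∈ T g2,
            v j * ((β ^ (-((gp j : ℤ) * (N : ℤ))) : Fˣ) : F) * (((x j : Fˣ) : F))⁻¹) = 0 := by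
        rw [hsub2 _ (fun j h1 h2 => by rw [hvz2 j h1 h2, zero_mul, zero_mul])]
        exact eq3
      have h3 : U1 * B1 = ∑ j ∈ T g1,
          v j * ((β ^ (-((gp j : ℤ) * (N : ℤ))) : Fˣ) : F) * (((x j : Fˣ) : F))⁻¹ := by
        rw [hB1, hU1, Finset.mul_sum]
        apply Finset.sum_congr rfl
        intro j hj
        rw [(hmemT g1 j).mp hj]
        ring
      have h4 : U2 * B2 = ∑ j ∈ T g2,
          v j * ((β ^ (-((gp j : ℤ) * (N : ℤ))) : Fˣ) : F) * (((x j : Fˣ) : F))⁻¹ := by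
        rw [hB2, hU2, Finset.mul_sum]
        apply Finset.sum_congr rfl
        intro j hj
        rw [(hmemT g2 j).mp hj]
        ring
      rw [h3, h4]
      exact h2
    have hdd1 : P1 * B1 = (-1 : F) ^ r * A1 := by
      rw [hP1, hB1, hA1]
      exact divided_diff (T g1) r hT1card x v (fun u hu => eq1 g1 u hg1μ hu)
    have hdd2 : P2 * B2 = (-1 : F) ^ r * A2 := by
      rw [hP2, hB2, hA2]
      exact divided_diff (T g2) r hT2card x v (fun u hu => eq1 g2 u hg2μ hu)
    have hP1ne : P1 ≠ 0 := by
      rw [hP1]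
      exact Finset.prod_ne_zero_iff.mpr (fun j _ => Units.ne_zero _)
    have hP2ne : P2 ≠ 0 := by
      rw [hP2]
      exact Finset.prod_ne_zero_iff.mpr (fun j _ => Units.ne_zero _)
    -- exponent sums
    set S1 : ℕ := ∑ j ∈ T g1, ex j with hS1
    set S2 : ℕ := ∑ j ∈ T g2, ex j with hS2
    have hS1b := hSbound g1 hg1μ hT1card
    have hS2b := hSbound g2 hg2μ hT2card
    have hP1u : P1 = ((β ^ S1 : Fˣ) : F) := by
      rw [hP1, hS1]
      have h1 : (∏ j ∈ T g1, x j : Fˣ) = β ^ ∑ j ∈ T g1, ex j := by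
        rw [hx]
        exact Finset.prod_pow_eq_pow_sum _ _ _
      rw [← h1]
      exact (map_prod (Units.coeHom F) x (T g1)).symm
    have hP2u : P2 = ((β ^ S2 : Fˣ) : F) := by
      rw [hP2, hS2]
      have h1 : (∏ j ∈ T g2, x j : Fˣ) = β ^ ∑ j ∈ T g2, ex j := by
        rw [hx]
        exact Finset.prod_pow_eq_pow_sum _ _ _
      rw [← h1]
      exact (map_prod (Units.coeHom F) x (T g2)).symm
    -- the key non-degeneracy condition
    have hkeyne : U1 * P2 - U2 * P1 ≠ 0 := by
      intro hzero
      have hFeq : U1 * P2 = U2 * P1 := sub_eq_zero.mp hzero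
      rw [hU1, hU2, hP1u, hP2u] at hFeq
      have huniteq : (β ^ (-((g1 : ℤ) * (N : ℤ))) * β ^ S2 : Fˣ)
          = (β ^ (-((g2 : ℤ) * (N : ℤ))) * β ^ S1 : Fˣ) := by
        apply Units.ext
        simpa using hFeq
      have hzp : (β : Fˣ) ^ ((S2 : ℤ) - (g1 : ℤ) * (N : ℤ))
          = (β : Fˣ) ^ ((S1 : ℤ) - (g2 : ℤ) * (N : ℤ)) := by
        rw [sub_eq_add_neg, sub_eq_add_neg, _root_.zpow_add, _root_.zpow_add, zpow_natCast, zpow_natCast]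
        rw [mul_comm ((β : Fˣ) ^ S2), mul_comm ((β : Fˣ) ^ S1)]
        exact huniteq
      have hone : (β : Fˣ) ^ (((S2 : ℤ) - (g1 : ℤ) * (N : ℤ))
          - ((S1 : ℤ) - (g2 : ℤ) * (N : ℤ))) = 1 := by
        rw [_root_.zpow_sub, hzp]
        simp
      have hdvd : ((orderOf β : ℕ) : ℤ) ∣ (((S2 : ℤ) - (g1 : ℤ) * (N : ℤ))
          - ((S1 : ℤ) - (g2 : ℤ) * (N : ℤ))) := orderOf_dvd_iff_zpow_eq_one.mpr hone
      exact key_exponent_bound μ N (orderOf β) g1 g2 (∑ i ∈ Finset.range (r + 1), i) S1 S2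
        hg1μ hg2μ hgeq hN1 hμN hS1b.1 hS1b.2 hS2b.1 hS2b.2 hdvd
    -- deduce A1 = 0 and A2 = 0
    have hA2eq : A2 = -A1 := by linear_combination eq2'
    have hfac : (-1 : F) ^ r * (A1 * (U1 * P2 - U2 * P1)) = 0 := by
      have h : U1 * (P1 * B1) * P2 + U2 * (P2 * B2) * P1 = 0 := by
        calc U1 * (P1 * B1) * P2 + U2 * (P2 * B2) * P1
            = (U1 * B1 + U2 * B2) * (P1 * P2) := by ring
          _ = 0 := by rw [eq3']; ring
      rw [hdd1, hdd2, hA2eq] at h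
      linear_combination h
    have hA1z : A1 = 0 := by
      have hpow : ((-1 : F)) ^ r ≠ 0 := pow_ne_zero _ (by norm_num)
      rcases mul_eq_zero.mp hfac with h | h
      · exact absurd h hpow
      · rcases mul_eq_zero.mp h with h' | h'
        · exact h'
        · exact absurd h' hkeyne
    have hA2z : A2 = 0 := by rw [hA2eq, hA1z, neg_zero]
    -- kernel on each of the two groups
    have hker1 : ∀ j ∈ T g1, v j = 0 := by
      apply vandermonde_kernel (T g1) (fun j => ((x j : Fˣ) : F)) (hxinj g1) v
      intro u hu
      rw [hT1card] at hu
      rcases Nat.lt_or_ge u r with h | h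
      · exact eq1 g1 u hg1μ h
      · have hur : u = r := by omega
        rw [hur, ← hA1]
        exact hA1z
    have hker2 : ∀ j ∈ T g2, v j = 0 := by
      apply vandermonde_kernel (T g2) (fun j => ((x j : Fˣ) : F)) (hxinj g2) v
      intro u hu
      rw [hT2card] at hu
      rcases Nat.lt_or_ge u r with h | h
      · exact eq1 g2 u hg2μ h
      · have hur : u = r := by omega
        rw [hur, ← hA2]
        exact hA2z
    apply hv0
    funext j
    simp only [Pi.zero_apply]
    by_cases hj1 : gp j = g1
    · exact hker1 j ((hmemT g1 j).mpr hj1)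
    · by_cases hj2 : gp j = g2
      · exact hker2 j ((hmemT g2 j).mpr hj2)
      · exact hvz2 j hj1 hj2
end

section
/- Let r, m, μ be positive integers with r ≤ m, set N = (r+1)(m−r) + 1, and let 1 ≤ z ≤ μ−1. Let j_1 < … < j_{r+1} and j'_1 < … < j'_{r+1} be integers in [0, m], with sums S = Σ_u j_u and S' = Σ_u j'_u. Then 1 ≤ Nz + S' − S ≤ Nμ − 1. Consequently, if β is an element of a finite field with multiplicative order O(β) ≥ μN, then β^{Nz + S' − S} ≠ 1. -/
/-- Gap lemma for strictly monotone integer sequences on `Fin n`. -/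
lemma strictMono_gap {n : ℕ} (f : Fin n → ℤ) (hf : StrictMono f) :
    ∀ k : ℕ, ∀ u v : Fin n, v.val = u.val + k → f u + k ≤ f v := by
  intro k
  induction k with
  | zero =>
    intro u v h
    have : u = v := Fin.ext (by omega)
    simp [this]
  | succ k ih =>
    intro u v h
    have hw : u.val + k < n := by omega
    have h1 : f u + k ≤ f ⟨u.val + k, hw⟩ := ih u ⟨u.val + k, hw⟩ rfl
    have h2 : f ⟨u.val + k, hw⟩ < f v := hf (by simp [Fin.lt_def]; omega)
    push_cast
    omega

lemma lower_bd {n : ℕ} (f : Fin n → ℤ) (hf : StrictMono f) (h0 : ∀ u, 0 ≤ f u)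
    (u : Fin n) : (u.val : ℤ) ≤ f u := by
  have hn : 0 < n := u.pos
  have := strictMono_gap f hf u.val ⟨0, hn⟩ u (by simp)
  have := h0 ⟨0, hn⟩
  omega

lemma upper_bd {n : ℕ} (m : ℤ) (f : Fin n → ℤ) (hf : StrictMono f)
    (h0 : ∀ u, f u ≤ m) (u : Fin n) : f u ≤ m - (n - 1) + u.val := by
  have hn : 0 < n := u.pos
  have := strictMono_gap f hf (n - 1 - u.val) u ⟨n - 1, by omega⟩ (by simp; omega)
  have := h0 ⟨n - 1, by omega⟩
  have : ((n - 1 - u.val : ℕ) : ℤ) = (n : ℤ) - 1 - u.val := by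
    push_cast [Nat.cast_sub (by omega : u.val ≤ n - 1), Nat.cast_sub (by omega : 1 ≤ n)]
    ring
  omega

/-- Let `r, m, μ` be positive integers with `r ≤ m`, set
`N = (r+1)(m−r) + 1`, and let `1 ≤ z ≤ μ−1`.  Let `j₁ < … < j_{r+1}` and
`j'₁ < … < j'_{r+1}` be integers in `[0, m]`, with sums `S = Σ_u j_u` and
`S' = Σ_u j'_u`.  Then `1 ≤ Nz + S' − S ≤ Nμ − 1`.  Consequently, if `β` is an element
of a finite field with multiplicative order at least `μN`, then `β^(Nz + S' − S) ≠ 1`. -/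
theorem statement6 (r m μ : ℕ) (hr : 0 < r) (hm : 0 < m) (hμ : 0 < μ) (hrm : r ≤ m)
    (N : ℕ) (hN : N = (r + 1) * (m - r) + 1)
    (z : ℕ) (hz1 : 1 ≤ z) (hz2 : z ≤ μ - 1)
    (j j' : Fin (r + 1) → ℤ)
    (hj : StrictMono j) (hj' : StrictMono j')
    (hjl : ∀ u, 0 ≤ j u) (hjh : ∀ u, j u ≤ (m : ℤ))
    (hj'l : ∀ u, 0 ≤ j' u) (hj'h : ∀ u, j' u ≤ (m : ℤ)) :
    (1 ≤ (N : ℤ) * z + (∑ u, j' u) - ∑ u, j u ∧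
        (N : ℤ) * z + (∑ u, j' u) - ∑ u, j u ≤ (N : ℤ) * μ - 1) ∧
      ∀ (K : Type) [Field K] [Fintype K] (β : Kˣ),
        μ * N ≤ orderOf β →
        β ^ ((N : ℤ) * z + (∑ u, j' u) - ∑ u, j u) ≠ 1 := by
  set e : ℤ := (N : ℤ) * z + (∑ u, j' u) - ∑ u, j u with he
  have hNZ : (N : ℤ) = (r + 1) * ((m : ℤ) - r) + 1 := by
    subst hN; push_cast [Nat.cast_sub hrm]; ring
  -- bound the difference of sums
  have hdiff : |(∑ u, j' u) - ∑ u, j u| ≤ (r + 1) * ((m : ℤ) - r) := by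
    have h1 : (∑ u, j' u) - ∑ u, j u = ∑ u : Fin (r+1), (j' u - j u) := by
      rw [Finset.sum_sub_distrib]
    rw [h1]
    calc |∑ u : Fin (r+1), (j' u - j u)| ≤ ∑ u : Fin (r+1), |j' u - j u| :=
          Finset.abs_sum_le_sum_abs _ _
      _ ≤ ∑ _u : Fin (r+1), ((m : ℤ) - r) := by
          apply Finset.sum_le_sum
          intro u _
          have h2 := lower_bd j hj hjl u
          have h3 := upper_bd (m : ℤ) j hj hjh u
          have h4 := lower_bd j' hj' hj'l u
          have h5 := upper_bd (m : ℤ) j' hj' hj'h u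
          rw [abs_le]
          push_cast at h3 h5 ⊢
          omega
      _ = (r + 1) * ((m : ℤ) - r) := by
          simp [Finset.sum_const, Finset.card_univ]
          ring
  rw [abs_le] at hdiff
  have hzμ : (z : ℤ) ≤ (μ : ℤ) - 1 := by
    have : z ≤ μ - 1 := hz2
    omega
  have hz1' : (1 : ℤ) ≤ z := by exact_mod_cast hz1
  have hNz : (1 : ℤ) * (N : ℤ) ≤ (z : ℤ) * N := by
    apply mul_le_mul_of_nonneg_right hz1' (by positivity)
  have hNz2 : (z : ℤ) * N ≤ ((μ : ℤ) - 1) * N := by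
    apply mul_le_mul_of_nonneg_right hzμ (by positivity)
  have hbounds : 1 ≤ e ∧ e ≤ (N : ℤ) * μ - 1 := by
    constructor
    · have : (N : ℤ) * z = z * N := by ring
      rw [he]
      nlinarith [hdiff.1]
    · nlinarith [hdiff.2]
  refine ⟨hbounds, ?_⟩
  intro K _ _ β hβ hpow
  have hdvd : (orderOf β : ℤ) ∣ e := orderOf_dvd_iff_zpow_eq_one.mpr hpow
  have hle : (orderOf β : ℤ) ≤ e := Int.le_of_dvd (by omega) hdvd
  have hμN : ((μ * N : ℕ) : ℤ) ≤ (orderOf β : ℤ) := by exact_mod_cast hβ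
  push_cast at hμN
  nlinarith [hbounds.2]
end
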